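/- arXiv:2310.00957 — 5 statements merged into one kernel-verified Lean document; each statement's English description precedes it below -/
import Mathlib

section
/- Let R, S be Hermitian 2×2 complex matrices with R positive definite (ker R = {0}) and S not a real scalar multiple of R. Then there exists λ₀ ∈ ℝ such that λ₀·R + S is positive semidefinite and has rank exactly 1. -/
set_option maxHeartbeats 1000000


open Matrix ComplexOrder

/-- Let `R, S` be Hermitian `2 × 2` complex matrices with `R` positive semidefinite with trivial
kernel, and `S` not a real scalar multiple of `R`. Then there exists `λ₀ ∈ ℝ` such that
`λ₀ • R + S` is positive semidefinite of rank exactly `1`. -/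
theorem stmt_10 (R S : Matrix (Fin 2) (Fin 2) ℂ)
    (hR : R.PosSemidef) (hker : ∀ v : Fin 2 → ℂ, R.mulVec v = 0 → v = 0)
    (hS : S.IsHermitian) (hSR : ∀ x : ℝ, S ≠ x • R) :
    ∃ lam : ℝ, (lam • R + S).PosSemidef ∧ (lam • R + S).rank = 1 := by
  classical
  -- R is positive definite
  have hRpd : R.PosDef := by
    refine PosDef.of_dotProduct_mulVec_pos hR.1 fun x hx =>
      lt_of_le_of_ne (hR.dotProduct_mulVec_nonneg x) fun h => hx ?_
    exact hker x ((hR.dotProduct_mulVec_zero_iff x).mp h.symm)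
  set B := (open scoped MatrixOrder in CFC.sqrt R) with hBdef
  have hBB : B * B = R := by
    open scoped MatrixOrder in exact CFC.sqrt_mul_sqrt_self R hR.nonneg
  have hBH : B.IsHermitian := by
    open scoped MatrixOrder in exact (CFC.sqrt_nonneg R).posSemidef.1
  have hBdet : IsUnit B.det := by
    have h2 : B.det * B.det = R.det := by rw [← det_mul, hBB]
    have : R.det ≠ 0 := hRpd.det_pos.ne'
    refine isUnit_iff_ne_zero.mpr fun h => this ?_
    rw [← h2, h, mul_zero]
  have hBu : IsUnit B := (Matrix.isUnit_iff_isUnit_det B).mpr hBdet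
  letI := hBu.invertible
  set M := B⁻¹ * S * B⁻¹ with hMdef
  have hM : M.IsHermitian := by
    have hBiH : B⁻¹.IsHermitian := hBH.inv
    show Mᴴ = M
    rw [hMdef, conjTranspose_mul, conjTranspose_mul, hBiH.eq, hS.eq, mul_assoc]
  have hSM : S = B * M * B := by
    rw [hMdef]
    rw [show B * (B⁻¹ * S * B⁻¹) * B = (B * B⁻¹) * S * (B⁻¹ * B) by
      simp only [mul_assoc]]
    rw [Matrix.mul_inv_of_invertible, Matrix.inv_mul_of_invertible, one_mul, mul_one]
  set ev := hM.eigenvalues with hev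
  obtain ⟨i₀, -, hmin⟩ := Finset.exists_min_image Finset.univ ev ⟨0, Finset.mem_univ 0⟩
  have hmin' : ∀ j, ev i₀ ≤ ev j := fun j => hmin j (Finset.mem_univ j)
  set U : Matrix (Fin 2) (Fin 2) ℂ := (hM.eigenvectorUnitary : Matrix (Fin 2) (Fin 2) ℂ)
    with hU
  have hUU : U * star U = 1 := Unitary.coe_mul_star_self _
  have hUU' : star U * U = 1 := Unitary.coe_star_mul_self _
  have hUdet : IsUnit U.det := by
    refine IsUnit.of_mul_eq_one (star U).det ?_
    rw [← det_mul, hUU, det_one]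
  have hUdet' : IsUnit (star U).det := by
    refine IsUnit.of_mul_eq_one U.det ?_
    rw [← det_mul, hUU', det_one]
  -- There is a strictly larger eigenvalue (else S = c • R)
  have hdist : ∃ j, ev i₀ < ev j := by
    by_contra hcon
    push_neg at hcon
    have heq : ∀ j, ev j = ev i₀ := fun j => le_antisymm (hcon j) (hmin' j)
    have hMscal : M = (ev i₀ : ℂ) • 1 := by
      have h1 : Matrix.diagonal (RCLike.ofReal ∘ ev : Fin 2 → ℂ) = (ev i₀ : ℂ) • 1 := by
        rw [smul_one_eq_diagonal,
          show (RCLike.ofReal ∘ ev : Fin 2 → ℂ) = fun _ => (ev i₀ : ℂ) from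
            funext fun j => by simp [heq j]]
      calc M = U * Matrix.diagonal (RCLike.ofReal ∘ ev) * star U := hM.spectral_theorem
        _ = (ev i₀ : ℂ) • (U * star U) := by rw [h1]; simp [Matrix.mul_smul, Matrix.smul_mul]
        _ = (ev i₀ : ℂ) • 1 := by rw [hUU]
    refine hSR (ev i₀) ?_
    rw [hSM, hMscal]
    have : B * ((ev i₀ : ℂ) • 1) * B = (ev i₀ : ℂ) • R := by
      rw [Matrix.mul_smul, Matrix.smul_mul, mul_one, hBB]
    rw [this]
    ext i j
    simp [Matrix.smul_apply, Complex.real_smul]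
  obtain ⟨j₁, hj₁⟩ := hdist
  have hj₁ne : j₁ ≠ i₀ := fun h => absurd hj₁ (by rw [h]; exact lt_irrefl _)
  -- the shifted diagonal
  set w : Fin 2 → ℂ := fun i => ((ev i - ev i₀ : ℝ) : ℂ) with hw
  have hwnn : ∀ i, 0 ≤ w i := fun i => by
    rw [hw]
    exact Complex.zero_le_real.mpr (sub_nonneg.mpr (hmin' i))
  set N : Matrix (Fin 2) (Fin 2) ℂ := U * Matrix.diagonal w * star U with hN
  have hNpsd : N.PosSemidef := by
    rw [hN]
    have := (Matrix.posSemidef_diagonal_iff.mpr hwnn).mul_mul_conjTranspose_same U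
    simpa [Matrix.star_eq_conjTranspose] using this
  have hrs : ∀ (r : ℝ) (A : Matrix (Fin 2) (Fin 2) ℂ), r • A = (r : ℂ) • A := by
    intro r A
    ext i j
    simp [Matrix.smul_apply, Complex.real_smul]
  -- N = (-ev i₀) • 1 + M
  have hNM : N = (-(ev i₀)) • (1 : Matrix (Fin 2) (Fin 2) ℂ) + M := by
    have hdiag : Matrix.diagonal w
        = ((-(ev i₀) : ℝ) : ℂ) • 1 + Matrix.diagonal (RCLike.ofReal ∘ ev : Fin 2 → ℂ) := by
      ext i j
      rcases eq_or_ne i j with rfl | hij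
      · simp only [Matrix.diagonal_apply_eq, Matrix.add_apply, Matrix.smul_apply,
          Matrix.one_apply_eq, Function.comp_apply, hw, smul_eq_mul, mul_one]
        rw [show ((RCLike.ofReal : ℝ → ℂ)) = Complex.ofReal from rfl]
        push_cast
        ring
      · simp [Matrix.diagonal_apply_ne _ hij, Matrix.one_apply_ne hij]
    rw [hN, hdiag, Matrix.mul_add, Matrix.add_mul, hrs]
    congr 1
    · rw [Matrix.mul_smul, Matrix.smul_mul, mul_one, hUU]
    · exact hM.spectral_theorem.symm
  -- rank of N
  have hrankN : N.rank = 1 := by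
    rw [hN, Matrix.rank_mul_eq_left_of_isUnit_det (star U) (U * Matrix.diagonal w) hUdet',
      Matrix.rank_mul_eq_right_of_isUnit_det U (Matrix.diagonal w) hUdet, Matrix.rank_diagonal]
    have hiff : ∀ i, w i ≠ 0 ↔ i = j₁ := by
      intro i
      constructor
      · intro hne
        by_contra hij
        have : i = i₀ := by omega
        rw [hw, this] at hne
        simp at hne
      · intro h
        rw [h, hw]
        have : (0:ℝ) < ev j₁ - ev i₀ := sub_pos.mpr hj₁
        simp only [ne_eq, Complex.ofReal_eq_zero]
        exact this.ne'
    rw [Fintype.card_congr (Equiv.subtypeEquivRight hiff), Fintype.card_subtype_eq]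
  have key : (-(ev i₀)) • R + S = B * N * B := by
    rw [hNM, Matrix.mul_add, Matrix.add_mul, ← hSM, hrs, hrs]
    congr 1
    rw [Matrix.mul_smul, Matrix.smul_mul, mul_one, hBB]
  refine ⟨-(ev i₀), ?_, ?_⟩
  · rw [key]
    have := hNpsd.conjTranspose_mul_mul_same B
    rwa [hBH.eq] at this
  · rw [key, Matrix.rank_mul_eq_left_of_isUnit_det B (B * N) hBdet,
      Matrix.rank_mul_eq_right_of_isUnit_det B N hBdet, hrankN]
end

section
/- Matricial Richter–Tchakaloff theorem: Let (X, 𝔛) be a measurable space, E a finite-dimensional real vector space of measurable maps F : X → H_q, μ a positive H_q-valued measure with E ⊆ L¹(μ; H_q), and Λ(F) = ∫⟨F, dμ⟩ the associated nonzero moment functional. Then there exist N ≤ dim E, points x_1,…,x_N ∈ X, and nonzero vectors v_1,…,v_N ∈ ℂ^q such that Λ(F) = Σ_{j=1}^N v_j* F(x_j) v_j for all F ∈ E. Moreover, if Y ∈ 𝔛 satisfies μ(X∖Y) = 0, the points x_j can be chosen in Y. -/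
open Matrix MeasureTheory ComplexOrder

/-- A positive `H_q`-valued measure on `(X, 𝔛)`, given by its trace measure `τ` together with a
measurable, pointwise positive semidefinite Radon–Nikodym matrix `Φ`. -/
structure MatMeasure (X : Type*) [MeasurableSpace X] (q : ℕ) where
  τ : Measure X
  Φ : X → Matrix (Fin q) (Fin q) ℂ
  measurable_entry : ∀ i j, Measurable fun x => Φ x i j
  posSemidef : ∀ x, (Φ x).PosSemidef


section AuxRT
open Finset RealInnerProductSpace


section Carath
variable {V : Type*} [AddCommGroup V] [Module ℝ V] [FiniteDimensional ℝ V]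

lemma carath_core (S : Set V) (Λ : V) :
    ∀ (n : ℕ) (t : Finset V) (f : V → ℝ), t.card ≤ n → ↑t ⊆ S → (∀ w ∈ t, 0 < f w) →
      Λ = ∑ w ∈ t, f w • w →
      ∃ N : ℕ, N ≤ Module.finrank ℝ V ∧ ∃ (c : Fin N → ℝ) (p : Fin N → V),
        (∀ j, 0 < c j) ∧ (∀ j, p j ∈ S) ∧ Λ = ∑ j, c j • p j := by
  classical
  intro n
  induction n with
  | zero =>
    intro t f hcard hsub hpos hsum
    refine ⟨0, Nat.zero_le _, fun j => 1, fun j => j.elim0, fun j => j.elim0, fun j => j.elim0, ?_⟩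
    rw [Nat.le_zero, Finset.card_eq_zero] at hcard
    subst hcard; simpa using hsum
  | succ n ih =>
    intro t f hcard hsub hpos hsum
    by_cases hc : t.card ≤ Module.finrank ℝ V
    · refine ⟨t.card, hc, fun j => f (t.equivFin.symm j : V), fun j => (t.equivFin.symm j : V),
        fun j => hpos _ (t.equivFin.symm j).2, fun j => hsub (t.equivFin.symm j).2, ?_⟩
      rw [hsum, ← Finset.sum_coe_sort t (fun w => f w • w)]
      exact (Equiv.sum_comp t.equivFin.symm (fun (x : t) => f (x : V) • (x : V))).symm
    · push_neg at hc
      obtain ⟨g₀, hg₀sum, x₀, hx₀t, hx₀⟩ :=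
        Module.exists_nontrivial_relation_of_finrank_lt_card hc
      -- get g with a positive value on t
      obtain ⟨g, hgsum, x₁, hx₁t, hx₁⟩ :
          ∃ g : V → ℝ, ∑ e ∈ t, g e • e = 0 ∧ ∃ x ∈ t, 0 < g x := by
        rcases lt_or_gt_of_ne hx₀ with h | h
        · exact ⟨fun v => -g₀ v, by simp [neg_smul, Finset.sum_neg_distrib, hg₀sum], x₀, hx₀t,
            by simpa using h⟩
        · exact ⟨g₀, hg₀sum, x₀, hx₀t, h⟩
      set P := t.filter (fun w => 0 < g w) with hP
      have hPne : P.Nonempty := ⟨x₁, Finset.mem_filter.2 ⟨hx₁t, hx₁⟩⟩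
      obtain ⟨y, hyP, hymin⟩ := P.exists_min_image (fun w => f w / g w) hPne
      have hyt : y ∈ t := (Finset.mem_filter.1 hyP).1
      have hgy : 0 < g y := (Finset.mem_filter.1 hyP).2
      set r := f y / g y with hr
      have hr0 : 0 < r := div_pos (hpos y hyt) hgy
      set c' := fun w => f w - r * g w with hc'
      have hc'nonneg : ∀ w ∈ t, 0 ≤ c' w := by
        intro w hw
        by_cases hgw : 0 < g w
        · have : r ≤ f w / g w := hymin w (Finset.mem_filter.2 ⟨hw, hgw⟩)
          have := (div_le_div_iff₀ hgy hgw).1 (hymin w (Finset.mem_filter.2 ⟨hw, hgw⟩))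
          simp only [hc', sub_nonneg, hr]
          rw [div_mul_eq_mul_div, div_le_iff₀ hgy] at *
          nlinarith
        · push_neg at hgw
          have : r * g w ≤ 0 := mul_nonpos_of_nonneg_of_nonpos hr0.le hgw
          have := hpos w hw
          simp only [hc']; linarith
      have hc'y : c' y = 0 := by
        simp only [hc', hr]; field_simp; ring
      set t' := t.filter (fun w => c' w ≠ 0) with ht'
      have ht'sub : t' ⊆ t.erase y := by
        intro w hw
        rcases Finset.mem_filter.1 hw with ⟨hwt, hwc⟩
        refine Finset.mem_erase.2 ⟨?_, hwt⟩
        rintro rfl; exact hwc hc'y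
      have ht'card : t'.card ≤ n := by
        have h1 := Finset.card_le_card ht'sub
        have h2 := Finset.card_erase_of_mem hyt
        omega
      have hsum' : Λ = ∑ w ∈ t', c' w • w := by
        rw [Finset.sum_filter_of_ne (by intro x hx h hcx; exact h (by rw [hcx, zero_smul]))]
        have : ∑ w ∈ t, c' w • w = (∑ w ∈ t, f w • w) - r • ∑ w ∈ t, g w • w := by
          rw [Finset.smul_sum, ← Finset.sum_sub_distrib]
          refine Finset.sum_congr rfl fun w hw => ?_
          simp [hc', sub_smul, smul_smul]
        rw [this, hgsum, smul_zero, sub_zero, hsum]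
      exact ih t' c' ht'card (fun w hw => hsub (Finset.filter_subset _ _ hw))
        (fun w hw => lt_of_le_of_ne (hc'nonneg w (Finset.filter_subset _ _ hw))
          (Ne.symm (Finset.mem_filter.1 hw).2)) hsum'

lemma carath {ι : Type*} [DecidableEq V] (S : Set V) (Λ : V) (t : Finset ι) (c : ι → ℝ) (w : ι → V)
    (hc : ∀ j ∈ t, 0 ≤ c j) (hw : ∀ j ∈ t, w j ∈ S) (hΛ : Λ = ∑ j ∈ t, c j • w j) :
    ∃ N : ℕ, N ≤ Module.finrank ℝ V ∧ ∃ (cc : Fin N → ℝ) (p : Fin N → V),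
      (∀ j, 0 < cc j) ∧ (∀ j, p j ∈ S) ∧ Λ = ∑ j, cc j • p j := by
  classical
  set f : V → ℝ := fun v => ∑ j ∈ t.filter (fun j => w j = v), c j with hf
  set T := t.image w with hT
  have hfib : Λ = ∑ v ∈ T, f v • v := by
    rw [hΛ, ← Finset.sum_fiberwise_of_maps_to (fun j hj => Finset.mem_image_of_mem w hj)
      (fun j => c j • w j)]
    refine Finset.sum_congr rfl fun v hv => ?_
    rw [hf, Finset.sum_smul]
    refine Finset.sum_congr rfl fun j hj => ?_
    rw [(Finset.mem_filter.1 hj).2]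
  set T' := T.filter (fun v => f v ≠ 0) with hT'
  have hsum' : Λ = ∑ v ∈ T', f v • v := by
    rw [hfib, Finset.sum_filter_of_ne (by intro x hx h hcx; exact h (by rw [hcx, zero_smul]))]
  refine carath_core S Λ T'.card T' f le_rfl ?_ ?_ hsum'
  · intro v hv
    obtain ⟨j, hjt, rfl⟩ := Finset.mem_image.1 (Finset.mem_filter.1 hv).1
    exact hw j hjt
  · intro v hv
    refine lt_of_le_of_ne ?_ (Ne.symm (Finset.mem_filter.1 hv).2)
    exact Finset.sum_nonneg fun j hj => hc j (Finset.filter_subset _ _ hj)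

end Carath

open Finset RealInnerProductSpace MeasureTheory

section Dich
variable {V : Type*} [NormedAddCommGroup V] [InnerProductSpace ℝ V] [FiniteDimensional ℝ V]

lemma dichotomy (S : Set V) (Λ : V) (hΛ : Λ ∈ Submodule.span ℝ S) :
    (∃ (n : ℕ) (c : Fin n → ℝ) (p : Fin n → V), (∀ j, 0 ≤ c j) ∧ (∀ j, p j ∈ S) ∧
        Λ = ∑ j, c j • p j) ∨
    (∃ w : V, (∀ s ∈ S, 0 ≤ ⟪w, s⟫) ∧ ⟪w, Λ⟫ ≤ 0 ∧ ∃ s₀ ∈ S, 0 < ⟪w, s₀⟫) := by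
  classical
  by_cases hrep : ∃ (n : ℕ) (c : Fin n → ℝ) (p : Fin n → V), (∀ j, 0 ≤ c j) ∧ (∀ j, p j ∈ S) ∧
      Λ = ∑ j, c j • p j
  · exact Or.inl hrep
  right
  set W : Submodule ℝ V := Submodule.span ℝ S with hW
  have hSW : ∀ s ∈ S, s ∈ W := fun s hs => Submodule.subset_span hs
  set S' : Set W := {y : W | (y : V) ∈ S} with hS'
  have hS'img : Subtype.val '' S' = S := by
    ext v; constructor
    · rintro ⟨y, hy, rfl⟩; exact hy
    · intro hv; exact ⟨⟨v, hSW v hv⟩, hv, rfl⟩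
  set C : Set W := {y : W | ∃ (n : ℕ) (c : Fin n → ℝ) (p : Fin n → W),
    (∀ j, 0 ≤ c j) ∧ (∀ j, p j ∈ S') ∧ y = ∑ j, c j • p j} with hC
  have hCzero : (0 : W) ∈ C := ⟨0, fun j => 0, fun j => 0, fun j => j.elim0, fun j => j.elim0,
    by simp⟩
  have hmemC : ∀ y : W, y ∈ S' → y ∈ C := fun y hy =>
    ⟨1, fun _ => 1, fun _ => y, fun _ => zero_le_one, fun _ => hy, by simp⟩
  have hconvexC : Convex ℝ C := by
    rintro y ⟨n, c, p, hc, hp, rfl⟩ z ⟨m, c', p', hc', hp', rfl⟩ a b ha hb hab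
    refine ⟨n + m, Fin.append (fun j => a * c j) (fun j => b * c' j), Fin.append p p',
      ?_, ?_, ?_⟩
    · intro j
      refine Fin.addCases (motive := fun j => 0 ≤ Fin.append (fun j => a * c j)
        (fun j => b * c' j) j) ?_ ?_ j
      · intro i; rw [Fin.append_left]; exact mul_nonneg ha (hc i)
      · intro i; rw [Fin.append_right]; exact mul_nonneg hb (hc' i)
    · intro j
      refine Fin.addCases (motive := fun j => Fin.append p p' j ∈ S') ?_ ?_ j
      · intro i; rw [Fin.append_left]; exact hp i
      · intro i; rw [Fin.append_right]; exact hp' i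
    · rw [Fin.sum_univ_add]
      simp only [Fin.append_left, Fin.append_right]
      rw [smul_sum, smul_sum]
      congr 1 <;> refine Finset.sum_congr rfl fun i _ => ?_ <;> rw [smul_smul]
  have hconeC : ∀ (t : ℝ), 0 ≤ t → ∀ y ∈ C, t • y ∈ C := by
    rintro t ht y ⟨n, c, p, hc, hp, rfl⟩
    refine ⟨n, fun j => t * c j, p, fun j => mul_nonneg ht (hc j), hp, ?_⟩
    rw [smul_sum]
    simp [smul_smul]
  set Λ' : W := ⟨Λ, hΛ⟩ with hΛ'
  have hΛC : Λ' ∉ C := by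
    rintro ⟨n, c, p, hc, hp, hs⟩
    refine hrep ⟨n, c, fun j => (p j : V), hc, fun j => hp j, ?_⟩
    have : (Λ' : V) = ((∑ j, c j • p j : W) : V) := by rw [← hs]
    simpa using this
  -- basis of W from S
  obtain ⟨s, hsS, hspan, hsli⟩ := exists_linearIndependent ℝ S
  have hsfin : s.Finite := hsli.finite
  haveI := hsfin.fintype
  set v : s → W := fun x => ⟨(x : V), hSW _ (hsS x.2)⟩ with hv
  have hvli : LinearIndependent ℝ v := by
    apply LinearIndependent.of_comp W.subtype
    convert hsli using 1 <;> rfl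
  have hvspan : ⊤ ≤ Submodule.span ℝ (Set.range v) := by
    have himg : W.subtype '' Set.range v = s := by
      ext x; constructor
      · rintro ⟨y, ⟨i, rfl⟩, rfl⟩; exact i.2
      · intro hx; exact ⟨v ⟨x, hx⟩, ⟨⟨x, hx⟩, rfl⟩, rfl⟩
    have h1 : Submodule.map W.subtype (Submodule.span ℝ (Set.range v)) = W := by
      rw [← Submodule.span_image, himg, hspan]
    have h2 : Submodule.map W.subtype (⊤ : Submodule ℝ W) = W := by
      simp [Submodule.map_subtype_top]
    exact le_of_eq (Submodule.map_injective_of_injective W.injective_subtype (by rw [h1, h2])).symm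
  set bW : Module.Basis s ℝ W := Module.Basis.mk hvli hvspan with hbW
  -- open subset of C
  set O : Set W := (⇑bW.equivFun) ⁻¹' {t | ∀ x, 0 < t x} with hO
  have hOopen : IsOpen O := by
    have hcont : Continuous (⇑bW.equivFun) :=
      LinearMap.continuous_of_finiteDimensional bW.equivFun.toLinearMap
    refine hcont.isOpen_preimage _ ?_
    have : {t : s → ℝ | ∀ x, 0 < t x} = Set.pi Set.univ fun _ => Set.Ioi (0:ℝ) := by
      ext t; simp [Set.mem_pi]
    rw [this]
    exact isOpen_set_pi Set.finite_univ fun _ _ => isOpen_Ioi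
  have hbWS' : ∀ x : s, bW x ∈ S' := by
    intro x
    rw [hbW, Module.Basis.mk_apply]
    exact hsS x.2
  have hOC : O ⊆ C := by
    intro y hy
    refine ⟨Fintype.card s, fun j => bW.equivFun y ((Fintype.equivFin s).symm j),
      fun j => bW ((Fintype.equivFin s).symm j), fun j => (hy _).le, fun j => hbWS' _, ?_⟩
    conv_lhs => rw [← Module.Basis.sum_equivFun bW y]
    exact (Equiv.sum_comp (Fintype.equivFin s).symm
      (fun x => bW.equivFun y x • bW x)).symm
  set u : W := ∑ x : s, bW x with hu
  have huO : u ∈ O := by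
    intro x
    rw [hu, map_sum]
    simp only [Finset.sum_apply]
    rw [Finset.sum_eq_single x]
    · rw [Module.Basis.equivFun_self]; simp
    · intro b _ hb; rw [Module.Basis.equivFun_self]; simp [hb]
    · intro h; exact absurd (Finset.mem_univ x) h
  have hΛint : Λ' ∉ interior C := fun h => hΛC (interior_subset h)
  obtain ⟨f, hf⟩ := geometric_hahn_banach_open_point hconvexC.interior isOpen_interior hΛint
  have huint : u ∈ interior C := (hOopen.subset_interior_iff.2 hOC) huO
  -- f ≤ f Λ' on C
  have hfC : ∀ y ∈ C, f y ≤ f Λ' := by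
    intro y hyC
    have hev : ∀ᶠ t in nhdsWithin (0:ℝ) (Set.Ioi 0), f (t • u + (1 - t) • y) ≤ f Λ' := by
      filter_upwards [Ioo_mem_nhdsGT_of_mem (Set.mem_Ico.2 ⟨le_rfl, zero_lt_one⟩)] with t ht
      exact (hf _ (hconvexC.combo_interior_self_mem_interior huint hyC ht.1
        (by linarith [ht.2]) (by ring))).le
    have hcont : Filter.Tendsto (fun t : ℝ => f (t • u + (1 - t) • y))
        (nhdsWithin (0:ℝ) (Set.Ioi 0)) (nhds (f y)) := by
      have : Continuous fun t : ℝ => f (t • u + (1 - t) • y) := by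
        apply f.continuous.comp
        exact ((continuous_id.smul continuous_const).add
          ((continuous_const.sub continuous_id).smul continuous_const))
      have h0 : f ((0:ℝ) • u + ((1:ℝ) - 0) • y) = f y := by simp
      exact h0 ▸ (this.tendsto 0).mono_left nhdsWithin_le_nhds
    exact le_of_tendsto hcont hev
  have hfΛnonneg : (0:ℝ) ≤ f Λ' := by
    have := hfC 0 hCzero; simpa using this
  have hfle0 : ∀ y ∈ C, f y ≤ 0 := by
    intro y hyC
    by_contra hpos
    push_neg at hpos
    have h1 : ((f Λ' + 1) / f y) • y ∈ C := hconeC _ (div_nonneg (by linarith) hpos.le) y hyC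
    have h2 := hfC _ h1
    rw [_root_.map_smul, smul_eq_mul, div_mul_cancel₀ _ (ne_of_gt hpos)] at h2
    linarith
  have hfu : f u < f Λ' := hf u huint
  -- exists s₀' in S' with f s₀' < 0
  have hs₀ : ∃ y ∈ S', f y < 0 := by
    by_contra hno
    push_neg at hno
    have hzero : ∀ y ∈ S', f y = 0 := fun y hy =>
      le_antisymm (hfle0 y (hmemC y hy)) (hno y hy)
    have hker : Submodule.span ℝ S' ≤ LinearMap.ker (f : W →ₗ[ℝ] ℝ) := by
      rw [Submodule.span_le]
      intro y hy
      exact LinearMap.mem_ker.2 (hzero y hy)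
    have hspanS' : Submodule.span ℝ S' = ⊤ := by
      apply Submodule.map_injective_of_injective W.injective_subtype
      rw [← Submodule.span_image, Submodule.coe_subtype, hS'img, Submodule.map_subtype_top]
    rw [hspanS', top_le_iff] at hker
    have hfz : ∀ y : W, f y = 0 := fun y => LinearMap.mem_ker.1 (hker.symm ▸ Submodule.mem_top)
    rw [hfz u, hfz Λ'] at hfu
    exact lt_irrefl _ hfu
  obtain ⟨s₀', hs₀'S, hfs₀⟩ := hs₀
  -- Riesz
  set w' : W := (InnerProductSpace.toDual ℝ W).symm (-f) with hw'
  have hw'inner : ∀ y : W, ⟪w', y⟫ = -(f y) := by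
    intro y
    rw [hw', InnerProductSpace.toDual_symm_apply]
    simp
  refine ⟨(w' : V), ?_, ?_, ?_⟩
  · intro t ht
    have hy : (⟨t, hSW t ht⟩ : W) ∈ S' := ht
    have h1 := hfle0 _ (hmemC _ hy)
    have h2 : ⟪(w' : V), t⟫ = -(f ⟨t, hSW t ht⟩) := by
      rw [← hw'inner ⟨t, hSW t ht⟩, Submodule.coe_inner]
    rw [h2]; linarith
  · have h2 : ⟪(w' : V), Λ⟫ = -(f Λ') := by
      rw [← hw'inner Λ', Submodule.coe_inner]
    rw [h2]; linarith
  · refine ⟨(s₀' : V), hs₀'S, ?_⟩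
    have h2 : ⟪(w' : V), (s₀' : V)⟫ = -(f s₀') := by
      rw [← hw'inner s₀', Submodule.coe_inner]
    rw [h2]; linarith

end Dich

lemma euclid_inner {d : ℕ} (w y : EuclideanSpace ℝ (Fin d)) : ⟪w, y⟫ = ∑ i, w i * y i := by
  simp [PiLp.inner_apply, RCLike.inner_apply, mul_comm]

lemma richter {X : Type*} [MeasurableSpace X] {d : ℕ} (ν : Measure X)
    (L : X → EuclideanSpace ℝ (Fin d))
    (hLint : ∀ i, Integrable (fun x => L x i) ν) :
    ∀ (k : ℕ) (Y : Set X), (∀ᵐ x ∂ν, x ∉ Y → L x = 0) →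
      Module.finrank ℝ (Submodule.span ℝ (L '' Y)) ≤ k →
      ∃ (n : ℕ) (c : Fin n → ℝ) (p : Fin n → X), (∀ j, 0 ≤ c j) ∧ (∀ j, p j ∈ Y) ∧
        ∀ i, ∫ x, L x i ∂ν = ∑ j, c j * L (p j) i := by
  classical
  set Λv : EuclideanSpace ℝ (Fin d) := WithLp.toLp 2 (fun i => ∫ x, L x i ∂ν) with hΛv
  have hΛvi : ∀ i, Λv i = ∫ x, L x i ∂ν := fun i => rfl
  have hIntEq : ∀ w : EuclideanSpace ℝ (Fin d),
      ∫ x, (∑ i, w i * L x i) ∂ν = ⟪w, Λv⟫ := by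
    intro w
    rw [euclid_inner]
    rw [integral_finset_sum _ (fun i _ => (hLint i).const_mul _)]
    exact Finset.sum_congr rfl fun i _ => integral_const_mul _ _
  intro k
  induction k with
  | zero =>
    intro Y hY0 hrank
    have hbot : Submodule.span ℝ (L '' Y) = ⊥ := by
      rw [Nat.le_zero] at hrank
      exact Submodule.finrank_eq_zero.1 hrank
    refine ⟨0, fun j => 0, fun j => j.elim0, fun j => j.elim0, fun j => j.elim0, ?_⟩
    intro i
    have : ∀ᵐ x ∂ν, L x i = 0 := by
      filter_upwards [hY0] with x hx
      by_cases hxY : x ∈ Y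
      · have : L x ∈ Submodule.span ℝ (L '' Y) := Submodule.subset_span ⟨x, hxY, rfl⟩
        rw [hbot, Submodule.mem_bot] at this
        rw [this]; rfl
      · rw [hx hxY]; rfl
    rw [integral_congr_ae this]
    simp
  | succ k ih =>
    intro Y hY0 hrank
    have hspanmem : Λv ∈ Submodule.span ℝ (L '' Y) := by
      rw [← Submodule.orthogonal_orthogonal (Submodule.span ℝ (L '' Y))]
      rw [Submodule.mem_orthogonal]
      intro w hw
      have : ∀ᵐ x ∂ν, (∑ i, w i * L x i) = 0 := by
        filter_upwards [hY0] with x hx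
        by_cases hxY : x ∈ Y
        · have hmem : L x ∈ Submodule.span ℝ (L '' Y) := Submodule.subset_span ⟨x, hxY, rfl⟩
          have := (Submodule.mem_orthogonal _ w).1 hw (L x) hmem
          rw [← euclid_inner, real_inner_comm]
          exact this
        · rw [hx hxY]
          refine Finset.sum_eq_zero fun i _ => ?_
          show w i * (0 : EuclideanSpace ℝ (Fin d)) i = 0
          simp
      rw [← hIntEq w, integral_eq_zero_of_ae this]
    rcases dichotomy (L '' Y) Λv hspanmem with ⟨n, c, p, hc, hp, hsum⟩ |
      ⟨w, hw1, hw2, s₀, hs₀S, hs₀pos⟩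
    · simp only [Set.mem_image] at hp
      choose pt hptY hpt using hp
      refine ⟨n, c, pt, hc, hptY, ?_⟩
      intro i
      have := congrArg (fun z : EuclideanSpace ℝ (Fin d) => z i) hsum
      simp only at this
      rw [← hΛvi i, this]
      rw [show (∑ j, c j • p j) i = ∑ j, c j * p j i from by
        induction (Finset.univ : Finset (Fin n)) using Finset.induction_on with
        | empty => rfl
        | insert _ _ hnot ihh =>
          rw [Finset.sum_insert hnot, Finset.sum_insert hnot, ← ihh]
          rfl]
      exact Finset.sum_congr rfl fun j _ => by rw [hpt j]
    · set h : X → ℝ := fun x => ∑ i, w i * L x i with hh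
      have hhint : Integrable h ν := integrable_finset_sum _ (fun i _ => (hLint i).const_mul _)
      have hhae : ∀ᵐ x ∂ν, x ∉ Y → h x = 0 := by
        filter_upwards [hY0] with x hx hxY
        show (∑ i, w i * L x i) = 0
        rw [hx hxY]
        refine Finset.sum_eq_zero fun i _ => ?_
        show w i * (0 : EuclideanSpace ℝ (Fin d)) i = 0
        simp
      have hhnn : 0 ≤ᵐ[ν] h := by
        filter_upwards [hhae] with x hx
        by_cases hxY : x ∈ Y
        · have := hw1 (L x) ⟨x, hxY, rfl⟩
          rw [euclid_inner] at this
          exact this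
        · simp [hx hxY]
      have hint0 : ∫ x, h x ∂ν = 0 := by
        refine le_antisymm ?_ (integral_nonneg_of_ae hhnn)
        rw [hIntEq w]
        exact hw2
      have hh0 : h =ᵐ[ν] 0 := (integral_eq_zero_iff_of_nonneg_ae hhnn hhint).1 hint0
      set Y₁ : Set X := {x | x ∈ Y ∧ h x = 0} with hY₁
      have hY₁0 : ∀ᵐ x ∂ν, x ∉ Y₁ → L x = 0 := by
        filter_upwards [hY0, hh0] with x hx hhx hxn
        refine hx fun hxY => hxn ⟨hxY, hhx⟩
      have hwperp : w ∈ (Submodule.span ℝ (L '' Y₁))ᗮ := by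
        rw [Submodule.mem_orthogonal']
        intro u hu
        induction hu using Submodule.span_induction with
        | mem z hz =>
          obtain ⟨x, hx, rfl⟩ := hz
          rw [euclid_inner]
          exact hx.2
        | zero => simp
        | add a b _ _ ha hb => rw [inner_add_right, ha, hb, add_zero]
        | smul r a _ ha => rw [inner_smul_right, ha, mul_zero]
      obtain ⟨x₀, hx₀Y, hx₀⟩ := hs₀S
      have hx₀pos : 0 < ⟪w, L x₀⟫ := by rw [hx₀]; exact hs₀pos
      have hnotmem : L x₀ ∉ Submodule.span ℝ (L '' Y₁) := by
        intro hmem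
        have := hwperp (L x₀)  -- not directly applicable; use mem_orthogonal'
        rw [Submodule.mem_orthogonal'] at hwperp
        have := hwperp (L x₀) hmem
        rw [this] at hx₀pos
        exact lt_irrefl _ hx₀pos
      have hlt : Submodule.span ℝ (L '' Y₁) < Submodule.span ℝ (L '' Y) := by
        refine lt_of_le_of_ne (Submodule.span_mono (Set.image_mono fun x hx => hx.1)) ?_
        intro heq
        exact hnotmem (heq ▸ Submodule.subset_span ⟨x₀, hx₀Y, rfl⟩)
      have hrank1 : Module.finrank ℝ (Submodule.span ℝ (L '' Y₁)) ≤ k := by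
        have := Submodule.finrank_lt_finrank_of_lt hlt
        omega
      obtain ⟨n, c, p, hc, hp, hres⟩ := ih Y₁ hY₁0 hrank1
      exact ⟨n, c, p, hc, fun j => (hp j).1, hres⟩


lemma diag_dot {q : ℕ} (M B : Matrix (Fin q) (Fin q) ℂ) (hB : B.IsHermitian) :
    (M * (B * B)).trace = ∑ r, star (fun i => B i r) ⬝ᵥ M.mulVec (fun i => B i r) := by
  rw [show M * (B * B) = M * B * B from (mul_assoc M B B).symm, Matrix.trace_mul_comm,
    Matrix.trace]
  refine Finset.sum_congr rfl fun r _ => ?_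
  rw [Matrix.diag_apply, Matrix.mul_apply, dotProduct]
  refine Finset.sum_congr rfl fun i _ => ?_
  rw [Pi.star_apply, hB.apply r i]
  congr 1

section SqrtCompat
open scoped MatrixOrder

noncomputable def Matrix.PosSemidef.sqrt {q : ℕ} {A : Matrix (Fin q) (Fin q) ℂ} (_hA : A.PosSemidef) :
    Matrix (Fin q) (Fin q) ℂ := CFC.sqrt A

lemma Matrix.PosSemidef.posSemidef_sqrt {q : ℕ} {A : Matrix (Fin q) (Fin q) ℂ} (hA : A.PosSemidef) :
    hA.sqrt.PosSemidef := Matrix.nonneg_iff_posSemidef.1 (CFC.sqrt_nonneg A)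

lemma Matrix.PosSemidef.sqrt_mul_self {q : ℕ} {A : Matrix (Fin q) (Fin q) ℂ} (hA : A.PosSemidef) :
    hA.sqrt * hA.sqrt = A := CFC.sqrt_mul_sqrt_self A (Matrix.nonneg_iff_posSemidef.2 hA)

end SqrtCompat

lemma trace_decomp {q : ℕ} (M A : Matrix (Fin q) (Fin q) ℂ) (c : ℝ) (hc : 0 ≤ c)
    (hA : A.PosSemidef) :
    c * ((M * A).trace).re = ∑ r, (star (fun i => (Real.sqrt c • hA.sqrt) i r) ⬝ᵥ
      M.mulVec fun i => (Real.sqrt c • hA.sqrt) i r).re := by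
  set B := Real.sqrt c • hA.sqrt with hBdef
  have hB : B.IsHermitian := by
    rw [hBdef, Matrix.IsHermitian, Matrix.conjTranspose_smul, star_trivial,
      hA.posSemidef_sqrt.1]
  have hBB : B * B = c • A := by
    rw [hBdef, smul_mul_smul_comm, Real.mul_self_sqrt hc, hA.sqrt_mul_self]
  calc c * ((M * A).trace).re = ((M * (c • A)).trace).re := by
        rw [Matrix.mul_smul, Matrix.trace_smul, Complex.smul_re]; rfl
    _ = ((M * (B * B)).trace).re := by rw [hBB]
    _ = _ := by rw [diag_dot M B hB, Complex.re_sum]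

section EuSum
lemma eusum {d : ℕ} {ι : Type*} (s : Finset ι) (f : ι → EuclideanSpace ℝ (Fin d)) (i : Fin d) :
    (∑ j ∈ s, f j) i = ∑ j ∈ s, f j i := by
  induction s using Finset.cons_induction with
  | empty => rfl
  | cons a s ha ih => rw [Finset.sum_cons, Finset.sum_cons, ← ih]; rfl
end EuSum

end AuxRT

/-- Matricial Richter–Tchakaloff theorem: if `E` is a finite-dimensional real vector space of
measurable Hermitian-matrix-valued maps, `μ` a positive `H_q`-valued measure with
`E ⊆ L¹(μ; H_q)` and nonzero moment functional `Λ(F) = ∫ ⟨F, dμ⟩`, and `Y` a measurable set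
with `μ(X \ Y) = 0`, then there are `N ≤ dim E` points `x_j ∈ Y` and nonzero vectors
`v_j ∈ ℂ^q` with `Λ(F) = Σ_j v_j* F(x_j) v_j` for all `F ∈ E`. -/
theorem stmt_12 {X : Type*} [MeasurableSpace X] [MeasurableSingletonClass X] {q : ℕ}
    (E : Submodule ℝ (X → Matrix (Fin q) (Fin q) ℂ)) [FiniteDimensional ℝ E]
    (hmeas : ∀ F ∈ E, ∀ i j, Measurable fun x => F x i j)
    (hherm : ∀ F ∈ E, ∀ x, (F x).IsHermitian)
    (μ : MatMeasure X q)
    (hint : ∀ F ∈ E, Integrable (fun x => ((F x * μ.Φ x).trace).re) μ.τ)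
    (hΛ : ∃ F ∈ E, ∫ x, ((F x * μ.Φ x).trace).re ∂μ.τ ≠ 0)
    (Y : Set X) (hY : MeasurableSet Y)
    (hμY : ∀ᵐ x ∂μ.τ, x ∉ Y → μ.Φ x = 0) :
    ∃ N : ℕ, N ≤ Module.finrank ℝ E ∧
      ∃ (pts : Fin N → X) (v : Fin N → (Fin q → ℂ)),
        (∀ j, pts j ∈ Y) ∧ (∀ j, v j ≠ 0) ∧
        ∀ F ∈ E, ∫ x, ((F x * μ.Φ x).trace).re ∂μ.τ =
          ∑ j, (star (v j) ⬝ᵥ (F (pts j)).mulVec (v j)).re := by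

  classical
  set d := Module.finrank ℝ E with hd
  let b : Module.Basis (Fin d) ℝ E := Module.finBasis ℝ E
  set L : X → EuclideanSpace ℝ (Fin d) :=
    fun x => WithLp.toLp 2 (fun i => ((((b i : E) : X → Matrix (Fin q) (Fin q) ℂ) x * μ.Φ x).trace).re) with hL
  have hLint : ∀ i, Integrable (fun x => L x i) μ.τ := fun i => hint _ (b i).2
  have hY0 : ∀ᵐ x ∂μ.τ, x ∉ Y → L x = 0 := by
    filter_upwards [hμY] with x hx hxY
    ext i
    show ((((b i : E) : X → Matrix (Fin q) (Fin q) ℂ) x * μ.Φ x).trace).re = 0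
    rw [hx hxY, Matrix.mul_zero, Matrix.trace_zero, Complex.zero_re]
  obtain ⟨n, c, p, hc, hpY, hR⟩ := richter μ.τ L hLint
    (Module.finrank ℝ (Submodule.span ℝ (L '' Y))) Y hY0 le_rfl
  -- stage 2 : spectral decomposition of the weighted matrices
  set v0 : Fin n → Fin q → Fin q → ℂ :=
    fun j r i => (Real.sqrt (c j) • (μ.posSemidef (p j)).sqrt) i r with hv0
  have hstage2 : ∀ j i, c j * L (p j) i =
      ∑ r, (star (v0 j r) ⬝ᵥ (((b i : E) : X → Matrix (Fin q) (Fin q) ℂ) (p j)).mulVec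
        (v0 j r)).re :=
    fun j i => trace_decomp _ _ (c j) (hc j) (μ.posSemidef (p j))
  set Tvec : X → (Fin q → ℂ) → EuclideanSpace ℝ (Fin d) :=
    fun x u => WithLp.toLp 2 (fun i => (star u ⬝ᵥ (((b i : E) : X → Matrix (Fin q) (Fin q) ℂ) x).mulVec u).re)
    with hTvec
  have hT0 : ∀ x, Tvec x 0 = 0 := by
    intro x; ext i
    show (star (0 : Fin q → ℂ) ⬝ᵥ _).re = 0
    rw [star_zero, zero_dotProduct, Complex.zero_re]
  set S : Set (EuclideanSpace ℝ (Fin d)) :=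
    {z | ∃ x, x ∈ Y ∧ ∃ u : Fin q → ℂ, u ≠ 0 ∧ z = Tvec x u} with hS
  set Λv : EuclideanSpace ℝ (Fin d) := WithLp.toLp 2 (fun i => ∫ x, L x i ∂μ.τ) with hΛv
  have hmain : Λv = ∑ jr : Fin n × Fin q, Tvec (p jr.1) (v0 jr.1 jr.2) := by
    ext i
    rw [eusum]
    show (∫ x, L x i ∂μ.τ) = _
    rw [hR i, Fintype.sum_prod_type]
    exact Finset.sum_congr rfl fun j _ => hstage2 j i
  set filt := Finset.univ.filter (fun jr : Fin n × Fin q => v0 jr.1 jr.2 ≠ 0) with hfilt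
  have hfsum : Λv = ∑ jr ∈ filt, (1:ℝ) • Tvec (p jr.1) (v0 jr.1 jr.2) := by
    rw [hfilt, Finset.sum_filter_of_ne, hmain]
    · simp only [one_smul]
    · intro jr _ hne
      by_contra hz
      rw [hz, hT0, smul_zero] at hne
      exact hne rfl
  have hmem : ∀ jr ∈ filt, Tvec (p jr.1) (v0 jr.1 jr.2) ∈ S := by
    intro jr hjr
    exact ⟨p jr.1, hpY jr.1, v0 jr.1 jr.2, (Finset.mem_filter.1 hjr).2, rfl⟩
  obtain ⟨N, hN, cc, pv, hccpos, hpvS, hΛrep⟩ :=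
    carath S Λv filt (fun _ => (1:ℝ)) (fun jr => Tvec (p jr.1) (v0 jr.1 jr.2))
      (fun _ _ => zero_le_one) hmem hfsum
  rw [finrank_euclideanSpace_fin] at hN
  have hpvS' : ∀ j, ∃ x, x ∈ Y ∧ ∃ u : Fin q → ℂ, u ≠ 0 ∧ pv j = Tvec x u := hpvS
  choose xs hxsY us husne hpveq using hpvS'
  set v : Fin N → Fin q → ℂ := fun j => Real.sqrt (cc j) • us j with hv
  have hvne : ∀ j, v j ≠ 0 := by
    intro j
    have hs : Real.sqrt (cc j) ≠ 0 := by
      refine ne_of_gt (Real.sqrt_pos.2 (hccpos j))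
    exact smul_ne_zero hs (husne j)
  have hkey : ∀ (j : Fin N) (M : Matrix (Fin q) (Fin q) ℂ),
      (star (v j) ⬝ᵥ M.mulVec (v j)).re = cc j * (star (us j) ⬝ᵥ M.mulVec (us j)).re := by
    intro j M
    show (star (Real.sqrt (cc j) • us j) ⬝ᵥ M.mulVec (Real.sqrt (cc j) • us j)).re = _
    rw [star_smul, star_trivial, smul_dotProduct, Matrix.mulVec_smul,
      dotProduct_smul, smul_smul, Real.mul_self_sqrt (hccpos j).le, Complex.smul_re,
      smul_eq_mul]
  -- linear maps on E
  set ΛE : E →ₗ[ℝ] ℝ :=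
    { toFun := fun F => ∫ x, (((F : X → Matrix (Fin q) (Fin q) ℂ) x * μ.Φ x).trace).re ∂μ.τ
      map_add' := by
        intro F G
        have h : ∀ x, ((((F + G : E) : X → Matrix (Fin q) (Fin q) ℂ)) x * μ.Φ x).trace.re
            = (((F : X → Matrix (Fin q) (Fin q) ℂ)) x * μ.Φ x).trace.re
              + (((G : X → Matrix (Fin q) (Fin q) ℂ)) x * μ.Φ x).trace.re := fun x => by
          rw [Submodule.coe_add, Pi.add_apply, Matrix.add_mul, Matrix.trace_add, Complex.add_re]
        simp only [h]
        exact integral_add (hint _ F.2) (hint _ G.2)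
      map_smul' := by
        intro r F
        have h : ∀ x, ((((r • F : E) : X → Matrix (Fin q) (Fin q) ℂ)) x * μ.Φ x).trace.re
            = r • ((((F : E) : X → Matrix (Fin q) (Fin q) ℂ)) x * μ.Φ x).trace.re := fun x => by
          rw [Submodule.coe_smul, Pi.smul_apply, Matrix.smul_mul, Matrix.trace_smul,
            Complex.smul_re]
        simp only [h]
        rw [integral_smul]
        rfl } with hΛE
  set PE : E →ₗ[ℝ] ℝ :=
    { toFun := fun F => ∑ j, (star (v j) ⬝ᵥ
        (((F : E) : X → Matrix (Fin q) (Fin q) ℂ) (xs j)).mulVec (v j)).re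
      map_add' := by
        intro F G
        rw [← Finset.sum_add_distrib]
        refine Finset.sum_congr rfl fun j _ => ?_
        rw [Submodule.coe_add, Pi.add_apply, Matrix.add_mulVec, dotProduct_add,
          Complex.add_re]
      map_smul' := by
        intro r F
        simp only [RingHom.id_apply, smul_eq_mul, Finset.mul_sum]

        refine Finset.sum_congr rfl fun j _ => ?_
        rw [Submodule.coe_smul, Pi.smul_apply, Matrix.smul_mulVec,
          dotProduct_smul, Complex.smul_re]
        rfl } with hPE
  have hEq : ΛE = PE := by
    refine b.ext fun i => ?_
    show (∫ x, ((((b i : E) : X → Matrix (Fin q) (Fin q) ℂ) x * μ.Φ x).trace).re ∂μ.τ) = _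
    have h1 : (∫ x, ((((b i : E) : X → Matrix (Fin q) (Fin q) ℂ) x * μ.Φ x).trace).re ∂μ.τ)
        = Λv i := rfl
    rw [h1, hΛrep, eusum]
    show ∑ j, (cc j • pv j) i = _
    refine Finset.sum_congr rfl fun j _ => ?_
    show cc j * pv j i = (star (v j) ⬝ᵥ
      (((b i : E) : X → Matrix (Fin q) (Fin q) ℂ) (xs j)).mulVec (v j)).re
    rw [hkey j, hpveq j]
  refine ⟨N, hN, xs, v, hxsY, hvne, ?_⟩
  intro F hF
  exact LinearMap.congr_fun hEq ⟨F, hF⟩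
end

section
/- Let E be a finite-dimensional real vector space of measurable maps X → H_q, E_⪰ = {F ∈ E : F(x) ⪰ 0 for all x}, and L(E) the set of moment functionals on E (functionals of the form F ↦ ∫⟨F,dμ⟩ for some positive H_q-valued measure μ with E ⊆ L¹(μ;H_q)). Then the closure of L(E) in the dual space E* equals the dual cone (E_⪰)^∧ = {ℓ ∈ E* : ℓ(F) ≥ 0 for all F ∈ E_⪰}, and consequently (L(E))^∧ = E_⪰. -/
open Matrix MeasureTheory ComplexOrder

/-- `μ` is a representing measure for the functional `Λ` on `E`:
every `F ∈ E` is `μ`-integrable and `Λ(F) = ∫ ⟨F, dμ⟩ = ∫ ⟨F, Φ⟩ dτ`. -/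
def Represents {X : Type*} [MeasurableSpace X] {q : ℕ}
    (E : Submodule ℝ (X → Matrix (Fin q) (Fin q) ℂ)) (Λ : E →ₗ[ℝ] ℝ)
    (μ : MatMeasure X q) : Prop :=
  (∀ F : E, Integrable
      (fun x => (((F : X → Matrix (Fin q) (Fin q) ℂ) x * μ.Φ x).trace).re) μ.τ) ∧
  ∀ F : E, Λ F = ∫ x, (((F : X → Matrix (Fin q) (Fin q) ℂ) x * μ.Φ x).trace).re ∂μ.τ

/-! ### Auxiliary matrix lemmas -/

section MatrixAux

variable {q : ℕ}

lemma re_nonneg_of_nonneg {z : ℂ} (h : 0 ≤ z) : 0 ≤ z.re := by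
  rw [Complex.le_def] at h; simpa using h.1

lemma psd_trace_nonneg {M : Matrix (Fin q) (Fin q) ℂ} (hM : M.PosSemidef) : (0:ℂ) ≤ M.trace := by
  rw [Matrix.trace]
  refine Finset.sum_nonneg fun i _ => ?_
  have := hM.dotProduct_mulVec_nonneg (Pi.single i 1)
  simpa [← Pi.single_star, single_dotProduct, Matrix.mulVec_single] using this

lemma psd_mul_trace_nonneg {A B : Matrix (Fin q) (Fin q) ℂ} (hA : A.PosSemidef)
    (hB : B.PosSemidef) : (0:ℂ) ≤ (A * B).trace := by
  obtain ⟨m, v, rfl⟩ := Matrix.posSemidef_iff_eq_sum_vecMulVec.mp hB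
  rw [Finset.mul_sum, Matrix.trace_sum]
  refine Finset.sum_nonneg fun k _ => ?_
  have e : (A * vecMulVec (v k) (star (v k))).trace = dotProduct (star (v k)) (A *ᵥ v k) := by
    simp only [Matrix.trace, Matrix.diag, Matrix.mul_apply, Matrix.vecMulVec_apply,
      dotProduct, Matrix.mulVec, Pi.star_apply, Finset.mul_sum]
    refine Finset.sum_congr rfl fun a _ => Finset.sum_congr rfl fun b _ => by ring
  rw [e]; exact hA.dotProduct_mulVec_nonneg _

lemma trace_mul_vecMulVec (M : Matrix (Fin q) (Fin q) ℂ) (v : Fin q → ℂ) :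
    (M * vecMulVec v (star v)).trace = dotProduct (star v) (M *ᵥ v) := by
  simp only [Matrix.trace, Matrix.diag, Matrix.mul_apply, Matrix.vecMulVec_apply,
    dotProduct, Matrix.mulVec, Pi.star_apply, Finset.mul_sum]
  refine Finset.sum_congr rfl fun i _ => Finset.sum_congr rfl fun j _ => by ring

lemma posSemidef_vecMulVec (v : Fin q → ℂ) : (vecMulVec v (star v)).PosSemidef := by
  have h : vecMulVec v (star v)
      = (Matrix.of fun (_ : Fin 1) j => star (v j))ᴴ
        * (Matrix.of fun (_ : Fin 1) j => star (v j)) := by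
    ext i j
    simp [Matrix.mul_apply, Matrix.vecMulVec_apply, Matrix.conjTranspose_apply, mul_comm]
  rw [h]; exact Matrix.posSemidef_conjTranspose_mul_self _

lemma quad_star_eq {M : Matrix (Fin q) (Fin q) ℂ} (hM : M.IsHermitian) (v : Fin q → ℂ) :
    star (dotProduct (star v) (M *ᵥ v)) = dotProduct (star v) (M *ᵥ v) := by
  simp only [dotProduct, Matrix.mulVec, star_sum, star_mul', Pi.star_apply, star_star,
    Finset.mul_sum, Finset.sum_mul]
  rw [Finset.sum_comm]
  refine Finset.sum_congr rfl fun i _ => Finset.sum_congr rfl fun j _ => ?_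
  rw [← hM.apply i j]
  ring

lemma posSemidef_of_re_quad {M : Matrix (Fin q) (Fin q) ℂ} (hM : M.IsHermitian)
    (h : ∀ v : Fin q → ℂ, 0 ≤ (dotProduct (star v) (M *ᵥ v)).re) : M.PosSemidef := by
  refine Matrix.PosSemidef.of_dotProduct_mulVec_nonneg hM fun v => ?_
  have him : (dotProduct (star v) (M *ᵥ v)).im = 0 := by
    have := quad_star_eq hM v
    have h2 := congrArg Complex.im this
    simp only [Complex.star_def, Complex.conj_im] at h2
    linarith
  rw [Complex.le_def]
  simp [him, h v]

end MatrixAux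

/-! ### Atomic moment functionals -/

section Atomic

set_option linter.unusedSectionVars false

variable {X : Type*} [MeasurableSpace X] [MeasurableSingletonClass X] {q : ℕ}
variable {E : Submodule ℝ (X → Matrix (Fin q) (Fin q) ℂ)}

lemma meas_integrand (hmeas : ∀ F ∈ E, ∀ i j, Measurable fun x => F x i j)
    {Φ : X → Matrix (Fin q) (Fin q) ℂ} (hΦ : ∀ i j, Measurable fun x => Φ x i j) (F : E) :
    Measurable fun x => (((F : X → Matrix (Fin q) (Fin q) ℂ) x * Φ x).trace).re := by
  have h : Measurable fun x => ((F : X → Matrix (Fin q) (Fin q) ℂ) x * Φ x).trace := by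
    simp only [Matrix.trace, Matrix.diag, Matrix.mul_apply]
    refine Finset.measurable_sum _ fun i _ => Finset.measurable_sum _ fun j _ => ?_
    exact (hmeas F F.2 i j).mul (hΦ j i)
  exact Complex.measurable_re.comp h

/-- Atomic moment functionals: finitely supported positive matrix combinations. -/
def Atomic (E : Submodule ℝ (X → Matrix (Fin q) (Fin q) ℂ)) (Λ : E →ₗ[ℝ] ℝ) : Prop :=
  ∃ (S : Finset X) (Φ : X → Matrix (Fin q) (Fin q) ℂ),
    (∀ i j, Measurable fun x => Φ x i j) ∧ (∀ x, (Φ x).PosSemidef) ∧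
    (∀ x ∉ S, Φ x = 0) ∧
    ∀ F : E, Λ F = ∑ x ∈ S, (((F : X → Matrix (Fin q) (Fin q) ℂ) x * Φ x).trace).re

lemma atomic_represents (hmeas : ∀ F ∈ E, ∀ i j, Measurable fun x => F x i j)
    {Λ : E →ₗ[ℝ] ℝ} (h : Atomic E Λ) : ∃ μ : MatMeasure X q, Represents E Λ μ := by
  obtain ⟨S, Φ, hm, hp, hz, hsum⟩ := h
  have hint : ∀ (F : E) (x : X),
      Integrable (fun y => (((F : X → Matrix (Fin q) (Fin q) ℂ) y * Φ y).trace).re)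
        (Measure.dirac x) := by
    intro F x
    refine ⟨(meas_integrand hmeas hm F).aestronglyMeasurable, ?_⟩
    rw [HasFiniteIntegral, lintegral_dirac]
    exact ENNReal.coe_lt_top
  refine ⟨⟨∑ x ∈ S, Measure.dirac x, Φ, hm, hp⟩, fun F => ?_, fun F => ?_⟩
  · exact integrable_finset_sum_measure.mpr fun x _ => hint F x
  · rw [integral_finset_sum_measure fun x _ => hint F x]
    simp only [integral_dirac]
    exact hsum F

lemma atomic_zero : Atomic E 0 := by
  refine ⟨∅, fun _ => 0, by simp [measurable_const], fun x => Matrix.PosSemidef.zero, by simp,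
    by simp⟩

lemma atomic_add {Λ₁ Λ₂ : E →ₗ[ℝ] ℝ} (h₁ : Atomic E Λ₁) (h₂ : Atomic E Λ₂) :
    Atomic E (Λ₁ + Λ₂) := by
  classical
  obtain ⟨S₁, Φ₁, hm₁, hp₁, hz₁, hs₁⟩ := h₁
  obtain ⟨S₂, Φ₂, hm₂, hp₂, hz₂, hs₂⟩ := h₂
  refine ⟨S₁ ∪ S₂, fun x => Φ₁ x + Φ₂ x, fun i j => (hm₁ i j).add (hm₂ i j),
    fun x => (hp₁ x).add (hp₂ x), fun x hx => ?_, fun F => ?_⟩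
  · show Φ₁ x + Φ₂ x = 0
    rw [hz₁ x fun h => hx (Finset.mem_union_left _ h),
      hz₂ x fun h => hx (Finset.mem_union_right _ h), add_zero]
  · have key : ∀ (Φ : X → Matrix (Fin q) (Fin q) ℂ) (S : Finset X), S ⊆ S₁ ∪ S₂ →
        (∀ x ∉ S, Φ x = 0) →
        ∑ x ∈ S₁ ∪ S₂, (((F : X → Matrix (Fin q) (Fin q) ℂ) x * Φ x).trace).re
          = ∑ x ∈ S, (((F : X → Matrix (Fin q) (Fin q) ℂ) x * Φ x).trace).re := by
      intro Φ S hsub hΦ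
      refine (Finset.sum_subset hsub fun x _ hx => ?_).symm
      rw [hΦ x hx]
      simp
    simp only [LinearMap.add_apply, hs₁ F, hs₂ F, mul_add, Matrix.trace_add, Complex.add_re,
      Finset.sum_add_distrib]
    rw [key Φ₁ S₁ Finset.subset_union_left hz₁, key Φ₂ S₂ Finset.subset_union_right hz₂]

lemma atomic_smul {Λ : E →ₗ[ℝ] ℝ} {c : ℝ} (hc : 0 ≤ c) (h : Atomic E Λ) :
    Atomic E (c • Λ) := by
  obtain ⟨S, Φ, hm, hp, hz, hs⟩ := h
  refine ⟨S, fun x => c • Φ x, fun i j => (hm i j).const_smul c, fun x => ?_, fun x hx => by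
    show c • Φ x = 0
    rw [hz x hx, smul_zero], fun F => ?_⟩
  · refine Matrix.PosSemidef.of_dotProduct_mulVec_nonneg ?_ fun v => ?_
    · show (c • Φ x)ᴴ = c • Φ x
      have := (hp x).1
      unfold Matrix.IsHermitian at this
      rw [Matrix.conjTranspose_smul, this, star_trivial]
    · show (0:ℂ) ≤ star v ⬝ᵥ (c • Φ x) *ᵥ v
      have h0 : (c • Φ x) *ᵥ v = c • (Φ x *ᵥ v) := by
        rw [Matrix.smul_mulVec]
      rw [h0, dotProduct_smul]
      have := (hp x).dotProduct_mulVec_nonneg v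
      have hcc : (0:ℂ) ≤ (c:ℂ) := by
        rw [Complex.le_def]; simp [hc]
      calc (0:ℂ) = (c:ℂ) * 0 := by ring
        _ ≤ (c:ℂ) * (star v ⬝ᵥ Φ x *ᵥ v) := by
            exact mul_le_mul_of_nonneg_left this hcc
        _ = c • (star v ⬝ᵥ Φ x *ᵥ v) := by rw [Complex.real_smul]
  · simp only [LinearMap.smul_apply, hs F, smul_eq_mul, Finset.mul_sum]
    refine Finset.sum_congr rfl fun x _ => ?_
    rw [show ((F : X → Matrix (Fin q) (Fin q) ℂ) x) * (c • Φ x)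
        = c • ((F : X → Matrix (Fin q) (Fin q) ℂ) x * Φ x) by rw [Matrix.mul_smul],
      Matrix.trace_smul]
    simp [Complex.real_smul]

lemma represents_nonneg {Λ : E →ₗ[ℝ] ℝ} {μ : MatMeasure X q} (h : Represents E Λ μ)
    (F : E) (hF : ∀ x, ((F : X → Matrix (Fin q) (Fin q) ℂ) x).PosSemidef) : 0 ≤ Λ F := by
  rw [h.2 F]
  exact integral_nonneg fun x =>
    re_nonneg_of_nonneg (psd_mul_trace_nonneg (hF x) (μ.posSemidef x))

end Atomic

/-! ### Evaluation functionals -/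

section Eval
set_option linter.unusedSectionVars false

variable {X : Type*} [MeasurableSpace X] [MeasurableSingletonClass X] {q : ℕ}
variable (E : Submodule ℝ (X → Matrix (Fin q) (Fin q) ℂ))

noncomputable def evalFun (x₀ : X) (v : Fin q → ℂ) : E →ₗ[ℝ] ℝ where
  toFun F := (((F : X → Matrix (Fin q) (Fin q) ℂ) x₀ * vecMulVec v (star v)).trace).re
  map_add' F G := by
    simp only [Submodule.coe_add, Pi.add_apply, add_mul, Matrix.trace_add, Complex.add_re]
  map_smul' c F := by
    simp only [Submodule.coe_smul, Pi.smul_apply, RingHom.id_apply, smul_eq_mul]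
    rw [Matrix.smul_mul, Matrix.trace_smul]
    simp [Complex.real_smul]

lemma evalFun_apply (x₀ : X) (v : Fin q → ℂ) (F : E) :
    evalFun E x₀ v F
      = (dotProduct (star v) (((F : X → Matrix (Fin q) (Fin q) ℂ) x₀) *ᵥ v)).re := by
  show (((F : X → Matrix (Fin q) (Fin q) ℂ) x₀ * vecMulVec v (star v)).trace).re = _
  rw [trace_mul_vecMulVec]

lemma atomic_eval (x₀ : X) (v : Fin q → ℂ) : Atomic E (evalFun E x₀ v) := by
  classical
  refine ⟨{x₀}, fun y => if y = x₀ then vecMulVec v (star v) else 0,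
    fun i j => ?_, fun y => ?_, fun y hy => ?_, fun F => ?_⟩
  · have he : (fun y => (if y = x₀ then vecMulVec v (star v) else (0 : Matrix (Fin q) (Fin q) ℂ)) i j)
        = fun y => if y = x₀ then vecMulVec v (star v) i j else (0:ℂ) := by
      funext y; split <;> rfl
    show Measurable fun y => (if y = x₀ then vecMulVec v (star v) else (0 : Matrix (Fin q) (Fin q) ℂ)) i j
    rw [he]
    exact Measurable.ite (measurableSet_eq) measurable_const measurable_const
  · dsimp only
    split
    · exact posSemidef_vecMulVec v
    · exact Matrix.PosSemidef.zero
  · simp only [Finset.mem_singleton] at hy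
    simp [hy]
  · simp only [Finset.sum_singleton, if_pos rfl]
    rfl

end Eval

/-! ### Euclidean transfer -/

section Euclid
set_option linter.unusedSectionVars false

variable {X : Type*} [MeasurableSpace X] [MeasurableSingletonClass X] {q : ℕ}
variable (E : Submodule ℝ (X → Matrix (Fin q) (Fin q) ℂ)) [FiniteDimensional ℝ E]

noncomputable def phiE : E ≃ₗ[ℝ] EuclideanSpace ℝ (Fin (Module.finrank ℝ E)) :=
  LinearEquiv.ofFinrankEq _ _ (by simp)

noncomputable def Lfun (h : EuclideanSpace ℝ (Fin (Module.finrank ℝ E))) : E →ₗ[ℝ] ℝ where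
  toFun F := inner ℝ h (phiE E F)
  map_add' F G := by simp only [map_add, inner_add_right]
  map_smul' c F := by
    simp only [_root_.map_smul, real_inner_smul_right, RingHom.id_apply, smul_eq_mul]

lemma Lfun_apply (h : EuclideanSpace ℝ (Fin (Module.finrank ℝ E))) (F : E) :
    Lfun E h F = inner ℝ h (phiE E F) := rfl

noncomputable def rvec (ℓ : E →ₗ[ℝ] ℝ) : EuclideanSpace ℝ (Fin (Module.finrank ℝ E)) :=
  (InnerProductSpace.toDual ℝ _).symm
    (LinearMap.toContinuousLinearMap (ℓ ∘ₗ (phiE E).symm.toLinearMap))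

lemma rvec_inner (ℓ : E →ₗ[ℝ] ℝ) (y : EuclideanSpace ℝ (Fin (Module.finrank ℝ E))) :
    (inner ℝ (rvec E ℓ) y : ℝ) = ℓ ((phiE E).symm y) := by
  rw [rvec, InnerProductSpace.toDual_symm_apply]
  simp

lemma Lfun_rvec (ℓ : E →ₗ[ℝ] ℝ) : Lfun E (rvec E ℓ) = ℓ := by
  ext F
  rw [Lfun_apply, rvec_inner, LinearEquiv.symm_apply_apply]

end Euclid

/-! ### Main theorem -/

/-- The closure of the cone of moment functionals on `E` (in the sense of pointwise limits,
which in finite dimension coincides with norm closure) equals the dual cone of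
`E_⪰ = {F ∈ E : F(x) ⪰ 0 for all x}`; consequently, the dual cone of the moment functionals
is `E_⪰` itself. -/
theorem stmt_13 {X : Type*} [MeasurableSpace X] [MeasurableSingletonClass X] {q : ℕ}
    (E : Submodule ℝ (X → Matrix (Fin q) (Fin q) ℂ)) [FiniteDimensional ℝ E]
    (hmeas : ∀ F ∈ E, ∀ i j, Measurable fun x => F x i j)
    (hherm : ∀ F ∈ E, ∀ x, (F x).IsHermitian) :
    (∀ ℓ : E →ₗ[ℝ] ℝ,
      ((∀ F : E, (∀ x, ((F : X → Matrix (Fin q) (Fin q) ℂ) x).PosSemidef) → 0 ≤ ℓ F) ↔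
        ∃ Λs : ℕ → (E →ₗ[ℝ] ℝ),
          (∀ n, ∃ μ : MatMeasure X q, Represents E (Λs n) μ) ∧
          ∀ F : E, Filter.Tendsto (fun n => Λs n F) Filter.atTop (nhds (ℓ F)))) ∧
    (∀ F : E, (∀ x, ((F : X → Matrix (Fin q) (Fin q) ℂ) x).PosSemidef) ↔
      ∀ Λ : E →ₗ[ℝ] ℝ, (∃ μ : MatMeasure X q, Represents E Λ μ) → 0 ≤ Λ F) := by
  classical
  have hmoment_nonneg : ∀ (Λ : E →ₗ[ℝ] ℝ), (∃ μ : MatMeasure X q, Represents E Λ μ) →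
      ∀ F : E, (∀ x, ((F : X → Matrix (Fin q) (Fin q) ℂ) x).PosSemidef) → 0 ≤ Λ F := by
    rintro Λ ⟨μ, hμ⟩ F hF
    exact represents_nonneg hμ F hF
  constructor
  · intro ℓ
    constructor
    · intro hℓ
      let H := EuclideanSpace ℝ (Fin (Module.finrank ℝ E))
      let s : Set H := {h | ∃ (x : X) (v : Fin q → ℂ), h = rvec E (evalFun E x v)}
      let A : PointedCone ℝ H := Submodule.span _ s
      let P : ProperCone ℝ H := { toSubmodule := A.closure, isClosed' := isClosed_closure }
      have hgen : ∀ (x : X) (v : Fin q → ℂ), rvec E (evalFun E x v) ∈ P := by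
        intro x v
        exact subset_closure (Submodule.subset_span ⟨x, v, rfl⟩)
      have hatomic : ∀ h ∈ A, Atomic E (Lfun E h) := by
        intro h hh
        induction hh using Submodule.span_induction with
        | mem a hm =>
            obtain ⟨x, v, rfl⟩ := hm
            rw [Lfun_rvec]
            exact atomic_eval E x v
        | zero =>
            have h0 : Lfun E (0 : H) = 0 := by
              ext F; simp [Lfun_apply]
            rw [h0]; exact atomic_zero
        | add a b _ _ ha hb =>
            have h0 : Lfun E (a + b) = Lfun E a + Lfun E b := by
              ext F; simp [Lfun_apply, inner_add_left]
            rw [h0]; exact atomic_add ha hb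
        | smul c a _ ha =>
            have hsm : (c • a : H) = (c : ℝ) • a := rfl
            have h0 : Lfun E (c • a) = (c : ℝ) • Lfun E a := by
              ext F
              rw [LinearMap.smul_apply, Lfun_apply, Lfun_apply, hsm, real_inner_smul_left,
                smul_eq_mul]
            rw [h0]; exact atomic_smul c.2 ha
      have hmemP : rvec E ℓ ∈ P := by
        rw [← ProperCone.innerDual_innerDual P, ProperCone.mem_innerDual]
        intro y hy
        rw [SetLike.mem_coe, ProperCone.mem_innerDual] at hy
        have hFy : ∀ x, (((phiE E).symm y : X → Matrix (Fin q) (Fin q) ℂ) x).PosSemidef := by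
          intro x
          refine posSemidef_of_re_quad (hherm _ ((phiE E).symm y).2 x) fun v => ?_
          have h1 := hy (hgen x v)
          rwa [rvec_inner, evalFun_apply] at h1
        have h2 := hℓ ((phiE E).symm y) hFy
        rwa [real_inner_comm, rvec_inner]
      have hmemC : rvec E ℓ ∈ closure (A : Set H) := hmemP
      obtain ⟨u, hu, hconv⟩ := mem_closure_iff_seq_limit.mp hmemC
      refine ⟨fun n => Lfun E (u n),
        fun n => atomic_represents hmeas (hatomic _ (hu n)), fun F => ?_⟩
      have h1 : Filter.Tendsto (fun n => (inner ℝ (u n) (phiE E F) : ℝ)) Filter.atTop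
          (nhds (inner ℝ (rvec E ℓ) (phiE E F))) := hconv.inner tendsto_const_nhds
      have h2 : (inner ℝ (rvec E ℓ) (phiE E F) : ℝ) = ℓ F := by
        rw [← Lfun_apply, Lfun_rvec]
      rw [show (fun n => Lfun E (u n) F) = fun n => (inner ℝ (u n) (phiE E F) : ℝ) from rfl,
        ← h2]
      exact h1
    · rintro ⟨Λs, hrep, htend⟩ F hF
      have h0 : ∀ n, 0 ≤ Λs n F := fun n => hmoment_nonneg (Λs n) (hrep n) F hF
      exact ge_of_tendsto (htend F) (Filter.Eventually.of_forall h0)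
  · intro F
    constructor
    · intro hF Λ hΛ
      exact hmoment_nonneg Λ hΛ F hF
    · intro hall x
      refine posSemidef_of_re_quad (hherm _ F.2 x) fun v => ?_
      have h1 := hall (evalFun E x v) (atomic_represents hmeas (atomic_eval E x v))
      rwa [evalFun_apply] at h1
end

section
/- Let Λ be a moment functional on E and x ∈ X. For every representing measure μ of Λ, there exists a finitely atomic representing measure ν of Λ with ν({x}) = μ({x}). -/
open Matrix MeasureTheory ComplexOrder Module Set
open scoped RealInnerProductSpace

universe u

/-- Richter's theorem statement, parametrized by a dimension bound. -/
def RichterStmt (n : ℕ) : Prop :=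
  ∀ (V : Type) [i1 : NormedAddCommGroup V] [i2 : InnerProductSpace ℝ V] [i3 : FiniteDimensional ℝ V],
    finrank ℝ V ≤ n →
  ∀ (Y : Type u) [i4 : MeasurableSpace Y] (τ : Measure Y) (S : Set Y), MeasurableSet S →
  ∀ (f : Y → V), (∀ w : V, Measurable fun y => ⟪f y, w⟫) →
    (∀ w : V, Integrable (fun y => ⟪f y, w⟫) (τ.restrict S)) →
  ∀ v : V, (∀ w : V, ⟪v, w⟫ = ∫ y, ⟪f y, w⟫ ∂(τ.restrict S)) →
    ∃ (k : ℕ) (p : Fin k → Y) (c : Fin k → ℝ),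
      (∀ j, p j ∈ S) ∧ (∀ j, 0 ≤ c j) ∧ v = ∑ j, c j • f (p j)

lemma descend {n : ℕ} (prev : RichterStmt.{u} n)
    (V : Type) [NormedAddCommGroup V] [InnerProductSpace ℝ V] [FiniteDimensional ℝ V]
    {Y : Type u} [MeasurableSpace Y] (τ : Measure Y) (S' : Set Y) (hS' : MeasurableSet S')
    (W : Submodule ℝ V) (hWn : finrank ℝ W ≤ n)
    (f : Y → V) (hf : ∀ w : V, Measurable fun y => ⟪f y, w⟫)
    (hfW : ∀ y ∈ S', f y ∈ W)
    (hint : ∀ w : V, Integrable (fun y => ⟪f y, w⟫) (τ.restrict S'))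
    (v : V) (hvW : v ∈ W)
    (hv : ∀ w : V, ⟪v, w⟫ = ∫ y, ⟪f y, w⟫ ∂(τ.restrict S')) :
    ∃ (k : ℕ) (p : Fin k → Y) (c : Fin k → ℝ),
      (∀ j, p j ∈ S') ∧ (∀ j, 0 ≤ c j) ∧ v = ∑ j, c j • f (p j) := by
  classical
  set f' : Y → W := fun y => if h : y ∈ S' then (⟨f y, hfW y h⟩ : W) else 0 with hf'def
  have hind : ∀ (w : W) (y : Y),
      ⟪f' y, w⟫ = S'.indicator (fun y => ⟪f y, (w : V)⟫) y := by
    intro w y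
    by_cases h : y ∈ S'
    · simp [hf'def, h, Submodule.coe_inner]
    · simp [hf'def, h]
  obtain ⟨k, p, c, h1, h2, h3⟩ :=
    prev W hWn Y τ S' hS' f'
      (by
        intro w
        have : (fun y => ⟪f' y, w⟫) = S'.indicator fun y => ⟪f y, (w : V)⟫ :=
          funext (hind w)
        rw [this]
        exact (hf _).indicator hS')
      (by
        intro w
        have : (fun y => ⟪f' y, w⟫) = S'.indicator fun y => ⟪f y, (w : V)⟫ :=
          funext (hind w)
        rw [this]
        exact (hint _).indicator hS')
      ⟨v, hvW⟩
      (by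
        intro w
        have h4 : (fun y => ⟪f' y, w⟫) = S'.indicator fun y => ⟪f y, (w : V)⟫ :=
          funext (hind w)
        rw [h4, integral_indicator hS', Measure.restrict_restrict hS', Set.inter_self]
        rw [Submodule.coe_inner]
        exact hv _)
  refine ⟨k, p, c, h1, h2, ?_⟩
  have := congrArg (Subtype.val) h3
  simp only at this
  rw [this]
  push_cast
  refine Finset.sum_congr rfl fun j _ => ?_
  rw [hf'def]
  simp [h1 j]

theorem richter_s16 : ∀ n : ℕ, RichterStmt.{u} n := by
  intro n
  induction n with
  | zero =>
    intro V _ _ _ hn Y _ τ S hS f hf hint v hv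
    have : Subsingleton V := by
      rw [← finrank_zero_iff (R := ℝ)]
      omega
    exact ⟨0, Fin.elim0, Fin.elim0, fun j => j.elim0, fun j => j.elim0, Subsingleton.elim _ _⟩
  | succ n ih =>
    intro V _ _ _ hn Y _ τ S hS f hf hint v hv
    classical
    by_cases hW : Submodule.span ℝ (f '' S) = ⊤
    · -- main case: the image spans
      set C : Set V := {z | ∃ (k : ℕ) (p : Fin k → Y) (c : Fin k → ℝ),
        (∀ j, p j ∈ S) ∧ (∀ j, 0 ≤ c j) ∧ z = ∑ j, c j • f (p j)} with hCdef
      by_cases hvC : v ∈ C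
      · exact hvC
      exfalso
      -- basic cone facts
      have hzero : (0 : V) ∈ C :=
        ⟨0, Fin.elim0, Fin.elim0, fun j => j.elim0, fun j => j.elim0, by simp⟩
      have hmemf : ∀ y ∈ S, f y ∈ C := fun y hy =>
        ⟨1, fun _ => y, fun _ => 1, fun _ => hy, fun _ => zero_le_one, by simp⟩
      have hsmul : ∀ (t : ℝ), 0 ≤ t → ∀ z ∈ C, t • z ∈ C := by
        rintro t ht z ⟨k, p, c, h1, h2, rfl⟩
        refine ⟨k, p, fun j => t * c j, h1, fun j => mul_nonneg ht (h2 j), ?_⟩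
        rw [Finset.smul_sum]
        simp [smul_smul]
      have hadd : ∀ z₁ ∈ C, ∀ z₂ ∈ C, z₁ + z₂ ∈ C := by
        rintro z₁ ⟨k₁, p₁, c₁, hp₁, hc₁, rfl⟩ z₂ ⟨k₂, p₂, c₂, hp₂, hc₂, rfl⟩
        refine ⟨k₁ + k₂, Fin.append p₁ p₂, Fin.append c₁ c₂, ?_, ?_, ?_⟩
        · intro j
          induction j using Fin.addCases with
          | left i => rw [Fin.append_left]; exact hp₁ i
          | right i => rw [Fin.append_right]; exact hp₂ i
        · intro j
          induction j using Fin.addCases with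
          | left i => rw [Fin.append_left]; exact hc₁ i
          | right i => rw [Fin.append_right]; exact hc₂ i
        · rw [Fin.sum_univ_add]
          simp [Fin.append_left, Fin.append_right]
      have hsum : ∀ {ι : Type} (s : Finset ι) (g : ι → V), (∀ i ∈ s, g i ∈ C) →
          (∑ i ∈ s, g i) ∈ C := by
        intro ι s g hg
        classical
        induction s using Finset.induction_on with
        | empty => simpa using hzero
        | insert a s2 hnot ih2 =>
          rw [Finset.sum_insert hnot]
          exact hadd _ (hg a (Finset.mem_insert_self a s2)) _
            (ih2 fun i hi => hg i (Finset.mem_insert_of_mem hi))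
      have hconv : Convex ℝ C := fun z₁ h₁ z₂ h₂ a b ha hb _ =>
        hadd _ (hsmul a ha z₁ h₁) _ (hsmul b hb z₂ h₂)
      -- v is in the closure of C
      have hvcl : v ∈ closure C := by
        by_contra hvcl
        obtain ⟨ℓ, u, hu1, hu2⟩ :=
          geometric_hahn_banach_closed_point (hconv.closure) isClosed_closure hvcl
        have hupos : 0 < u := by
          have := hu1 0 (subset_closure hzero)
          simpa using this
        have hCnonpos : ∀ z ∈ C, ℓ z ≤ 0 := by
          intro z hz
          by_contra hpos
          push_neg at hpos
          have ht : (0:ℝ) ≤ u / ℓ z := le_of_lt (div_pos hupos hpos)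
          have := hu1 _ (subset_closure (hsmul _ ht z hz))
          rw [_root_.map_smul] at this
          simp only [smul_eq_mul] at this
          rw [div_mul_cancel₀ _ (ne_of_gt hpos)] at this
          exact lt_irrefl u this
        set w := (InnerProductSpace.toDual ℝ V).symm ℓ with hwdef
        have hwx : ∀ z : V, ⟪z, w⟫ = ℓ z := by
          intro z
          rw [real_inner_comm]
          exact InnerProductSpace.toDual_symm_apply
        have : ℓ v ≤ 0 := by
          rw [← hwx, hv w]
          apply integral_nonpos_of_ae
          filter_upwards [ae_restrict_mem hS] with y hy
          rw [hwx]
          exact hCnonpos _ (hmemf y hy)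
        linarith [hu2]
      -- an interior point of C
      obtain ⟨b, hbsub, hbspan, hbli⟩ := exists_linearIndependent ℝ (f '' S)
      have hbfin : b.Finite := hbli.setFinite
      haveI := hbfin.fintype
      have hbspan' : ⊤ ≤ Submodule.span ℝ (Set.range ((↑) : b → V)) := by
        rw [Subtype.range_coe, hbspan, hW]
      let bb : Basis b ℝ V := Basis.mk hbli hbspan'
      have hbC : ∀ i : b, bb i ∈ C := fun i => by
        rw [show bb i = (i : V) from Basis.mk_apply hbli hbspan' i]
        obtain ⟨y, hy, hyi⟩ := hbsub i.2
        exact hyi ▸ hmemf y hy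
      let e : V ≃ₗ[ℝ] (b → ℝ) := bb.equivFun
      let O : Set V := e.symm '' {c | ∀ i, 0 < c i}
      have hOopen : IsOpen O := by
        have h1 : IsOpen {c : b → ℝ | ∀ i, 0 < c i} := by
          have : {c : b → ℝ | ∀ i, 0 < c i} = Set.pi Set.univ fun _ => Set.Ioi 0 := by
            ext c; simp [Set.mem_pi]
          rw [this]
          exact isOpen_set_pi Set.finite_univ fun i _ => isOpen_Ioi
        exact e.toContinuousLinearEquiv.symm.toHomeomorph.isOpenMap _ h1
      have hOC : O ⊆ C := by
        rintro z ⟨cc, hcc, rfl⟩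
        rw [Basis.equivFun_symm_apply]
        exact hsum _ _ fun i _ => hsmul _ (le_of_lt (hcc i)) _ (hbC i)
      set u0 : V := e.symm (fun _ => 1) with hu0def
      have hu0O : u0 ∈ O := ⟨fun _ => 1, fun i => one_pos, rfl⟩
      have hu0C : u0 ∈ interior C := interior_maximal hOC hOopen hu0O
      have hu0cl : u0 ∈ interior (closure C) :=
        interior_mono subset_closure hu0C
      by_cases hvint : v ∈ interior (closure C)
      · -- v would be in C
        rcases eq_or_ne v u0 with rfl | hne
        · exact hvC (interior_subset hu0C)
        obtain ⟨δ, hδ, hball⟩ := Metric.isOpen_iff.1 isOpen_interior v hvint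
        set ε : ℝ := δ / (2 * ‖v - u0‖) with hεdef
        have hnorm : 0 < ‖v - u0‖ := by
          rw [norm_pos_iff, sub_ne_zero]; exact hne
        have hε : 0 < ε := div_pos hδ (by positivity)
        set v' : V := v + ε • (v - u0) with hv'def
        have hv'cl : v' ∈ closure C := by
          have hdist : dist v' v < δ := by
            rw [dist_eq_norm]
            have : v' - v = ε • (v - u0) := by rw [hv'def]; abel
            rw [this, norm_smul, Real.norm_eq_abs, abs_of_pos hε]
            have hx2 : ε * ‖v - u0‖ = δ / 2 := by
              rw [hεdef]
              field_simp
            rw [hx2]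
            linarith
          exact interior_subset (hball (Metric.mem_ball.2 hdist))
        have h1ε : (0:ℝ) < 1 + ε := by linarith
        have hcombo : (ε / (1 + ε)) • u0 + (1 / (1 + ε)) • v' = v := by
          rw [hv'def]
          match_scalars <;> field_simp <;> ring
        have hvintC : v ∈ interior C := by
          rw [← hcombo]
          exact hconv.combo_interior_closure_mem_interior hu0C hv'cl
            (div_pos hε h1ε) (le_of_lt (div_pos one_pos h1ε)) (by field_simp; ring)
        exact hvC (interior_subset hvintC)
      · -- supporting hyperplane case: reduce dimension
        obtain ⟨ℓ, hℓ⟩ := geometric_hahn_banach_open_point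
          (hconv.closure.interior) isOpen_interior hvint
        have hle : ∀ z ∈ closure C, ℓ z ≤ ℓ v := by
          intro z hz
          have key : ∀ t : ℝ, t ∈ Set.Ioo (0:ℝ) 1 → ℓ ((1 - t) • u0 + t • z) ≤ ℓ v := by
            intro t ht
            refine le_of_lt (hℓ _ ?_)
            refine (hconv.closure).combo_interior_closure_mem_interior hu0cl
              (by rwa [closure_closure]) (by linarith [ht.2]) (le_of_lt ht.1) (by ring)
          have hcont : Filter.Tendsto (fun t : ℝ => ℓ ((1 - t) • u0 + t • z))
              (nhdsWithin 1 (Set.Iio 1)) (nhds (ℓ z)) := by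
            have hc : Continuous fun t : ℝ => ℓ ((1 - t) • u0 + t • z) :=
              ℓ.continuous.comp (((continuous_const.sub continuous_id).smul continuous_const).add (continuous_id.smul continuous_const))
            have h1 := hc.tendsto 1
            simp only [sub_self, zero_smul, one_smul, zero_add] at h1
            exact h1.mono_left nhdsWithin_le_nhds
          refine le_of_tendsto hcont ?_
          filter_upwards [Ioo_mem_nhdsLT_of_mem
            (show (1:ℝ) ∈ Set.Ioc 0 1 by constructor <;> norm_num)] with t ht
          exact key t ht
        have hlv0 : 0 ≤ ℓ v := by simpa using hle 0 (subset_closure hzero)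
        have hC0 : ∀ z ∈ C, ℓ z ≤ 0 := by
          intro z hz
          by_contra hpos
          push_neg at hpos
          have ht : (0:ℝ) ≤ (ℓ v + 1) / (ℓ z) := by positivity
          have h2 := hle _ (subset_closure (hsmul _ ht z hz))
          rw [_root_.map_smul] at h2
          simp only [smul_eq_mul] at h2
          rw [div_mul_cancel₀ _ (ne_of_gt hpos)] at h2
          linarith
        set w := (InnerProductSpace.toDual ℝ V).symm ℓ with hwdef
        have hwx : ∀ z : V, ⟪z, w⟫ = ℓ z := fun z => by
          rw [real_inner_comm]; exact InnerProductSpace.toDual_symm_apply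
        have hvle : ℓ v ≤ 0 := by
          rw [← hwx, hv w]
          apply integral_nonpos_of_ae
          filter_upwards [ae_restrict_mem hS] with y hy
          rw [hwx]
          exact hC0 _ (hmemf y hy)
        have hlv : ℓ v = 0 := le_antisymm hvle hlv0
        have hae : (fun y => ⟪f y, -w⟫) =ᵐ[τ.restrict S] 0 := by
          have hnn : 0 ≤ᵐ[τ.restrict S] fun y => ⟪f y, -w⟫ := by
            filter_upwards [ae_restrict_mem hS] with y hy
            rw [inner_neg_right, hwx]
            simpa using hC0 _ (hmemf y hy)
          have h0 : ∫ y, ⟪f y, -w⟫ ∂(τ.restrict S) = 0 := by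
            rw [← hv (-w), inner_neg_right, hwx, hlv, neg_zero]
          exact (integral_eq_zero_iff_of_nonneg_ae hnn (hint (-w))).1 h0
        set g : Y → ℝ := fun y => ⟪f y, w⟫ with hgdef
        set S' := S ∩ {y | g y = 0} with hS'def
        have hgmeas : MeasurableSet {y | g y = 0} := (hf w) (measurableSet_singleton 0)
        have hS'meas : MeasurableSet S' := hS.inter hgmeas
        have hnull : τ (S \ S') = 0 := by
          have h1 : τ.restrict S {y | g y = 0}ᶜ = 0 := by
            have h2 := hae
            rw [Filter.EventuallyEq, ae_iff] at h2
            have h3 : {y | ¬ (fun y => ⟪f y, -w⟫) y = (0 : Y → ℝ) y} = {y | g y = 0}ᶜ := by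
              ext y
              simp [hgdef, inner_neg_right]
            rwa [h3] at h2
          rw [Measure.restrict_apply hgmeas.compl] at h1
          have h4 : S \ S' = {y | g y = 0}ᶜ ∩ S := by
            rw [hS'def, Set.diff_self_inter, Set.diff_eq, Set.inter_comm]
          rwa [h4]
        have hSS' : S =ᵐ[τ] S' := by
          rw [ae_eq_set]
          refine ⟨hnull, ?_⟩
          rw [Set.diff_eq_empty.2 Set.inter_subset_left]
          exact measure_empty
        have hrestr : τ.restrict S' = τ.restrict S := (Measure.restrict_congr_set hSS').symm
        have hwne : w ≠ 0 := by
          intro h0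
          have h1 := hℓ u0 hu0cl
          rw [← hwx u0, ← hwx v, h0] at h1
          simp at h1
        have hW₀ : ∀ z : V, z ∈ (ℝ ∙ w)ᗮ ↔ ⟪z, w⟫ = 0 := by
          intro z
          rw [Submodule.mem_orthogonal_singleton_iff_inner_right, real_inner_comm]
        have hwnot : w ∉ (ℝ ∙ w)ᗮ := fun h =>
          hwne (by have h2 := (hW₀ w).1 h; rwa [inner_self_eq_zero] at h2)
        have hrank : finrank ℝ ((ℝ ∙ w)ᗮ : Submodule ℝ V) ≤ n := by
          have h1 : ((ℝ ∙ w)ᗮ : Submodule ℝ V) < ⊤ :=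
            lt_top_iff_ne_top.2 fun h => hwnot (h ▸ Submodule.mem_top)
          have h2 := Submodule.finrank_lt h1.ne
          omega
        have hfW₀ : ∀ y ∈ S', f y ∈ (ℝ ∙ w)ᗮ := fun y hy => (hW₀ _).2 hy.2
        have hvW₀ : v ∈ (ℝ ∙ w)ᗮ := (hW₀ _).2 (by rw [hwx]; exact hlv)
        obtain ⟨k, p, c, h1, h2, h3⟩ := descend ih V τ S' hS'meas _ hrank f hf hfW₀
          (fun w' => by rw [hrestr]; exact hint w')
          v hvW₀ (fun w' => by rw [hrestr]; exact hv w')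
        exact hvC ⟨k, p, c, fun j => (h1 j).1, h2, h3⟩
    · -- the span W is a proper subspace; descend to it
      set W := Submodule.span ℝ (f '' S) with hWdef
      have hfW : ∀ y ∈ S, f y ∈ W := fun y hy =>
        Submodule.subset_span (Set.mem_image_of_mem f hy)
      -- v ∈ W via orthogonal projection
      have hvW : v ∈ W := by
        set w := v - (W.orthogonalProjection v : V) with hwdef
        have hwperp : w ∈ Wᗮ := W.sub_starProjection_mem_orthogonal v
        have hzero : ∀ y ∈ S, ⟪f y, w⟫ = 0 := fun y hy =>
          (Submodule.mem_orthogonal W w).1 hwperp _ (hfW y hy)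
        have h0 : ⟪v, w⟫ = 0 := by
          rw [hv w]
          rw [integral_eq_zero_of_ae ?_]
          filter_upwards [ae_restrict_mem hS] with y hy
          exact hzero y hy
        have hsplit : ⟪v, w⟫ = ⟪(W.orthogonalProjection v : V), w⟫ + ⟪w, w⟫ := by
          rw [← inner_add_left]
          congr 1
          rw [hwdef]
          abel
        have hpw : ⟪(W.orthogonalProjection v : V), w⟫ = 0 :=
          (Submodule.mem_orthogonal W w).1 hwperp _ (W.orthogonalProjection v).2
        have : ⟪w, w⟫ = (0:ℝ) := by rw [hsplit, hpw] at h0; linarith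
        have hw0 : w = 0 := by rwa [inner_self_eq_zero] at this
        have : v = (W.orthogonalProjection v : V) := by
          have := hwdef ▸ hw0
          rwa [sub_eq_zero] at this
        rw [this]; exact (W.orthogonalProjection v).2
      have hrank : finrank ℝ W ≤ n := by
        have h1 : finrank ℝ W < finrank ℝ V :=
          Submodule.finrank_lt (lt_top_iff_ne_top.2 hW).ne
        omega
      exact descend ih V τ S hS W hrank f hf hfW hint v hvW hv

section Aux


variable {X : Type u} [MeasurableSpace X] {q : ℕ}

/-- The evaluation functional `F ↦ Re tr(F(y) Φ(y))`. -/
noncomputable def evp (E : Submodule ℝ (X → Matrix (Fin q) (Fin q) ℂ))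
    (Φ : X → Matrix (Fin q) (Fin q) ℂ) (y : X) : E →ₗ[ℝ] ℝ where
  toFun F := (((F : X → Matrix (Fin q) (Fin q) ℂ) y * Φ y).trace).re
  map_add' F G := by
    show ((((F : X → Matrix (Fin q) (Fin q) ℂ) y
        + (G : X → Matrix (Fin q) (Fin q) ℂ) y) * Φ y).trace).re = _
    rw [add_mul, Matrix.trace_add, Complex.add_re]
  map_smul' c F := by
    show (((c • (F : X → Matrix (Fin q) (Fin q) ℂ) y) * Φ y).trace).re = _
    rw [smul_mul_assoc, Matrix.trace_smul, Complex.smul_re]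
    rfl

lemma evp_measurable (E : Submodule ℝ (X → Matrix (Fin q) (Fin q) ℂ))
    (hmeas : ∀ F ∈ E, ∀ i j, Measurable fun x => F x i j)
    (Φ : X → Matrix (Fin q) (Fin q) ℂ) (hΦ : ∀ i j, Measurable fun x => Φ x i j)
    (F : E) : Measurable fun y => evp E Φ y F := by
  have h : (fun y => evp E Φ y F)
      = fun y => ∑ i, ∑ j, Complex.re ((F : X → Matrix (Fin q) (Fin q) ℂ) y i j * Φ y j i) := by
    funext y
    show (((F : X → Matrix (Fin q) (Fin q) ℂ) y * Φ y).trace).re = _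
    rw [Matrix.trace]
    rw [Complex.re_sum]
    refine Finset.sum_congr rfl fun i _ => ?_
    rw [Matrix.diag_apply, Matrix.mul_apply, Complex.re_sum]
  rw [h]
  exact Finset.measurable_sum _ fun i _ => Finset.measurable_sum _ fun j _ =>
    Complex.measurable_re.comp ((hmeas F F.2 i j).mul (hΦ j i))

lemma posSemidef_real_smul {M : Matrix (Fin q) (Fin q) ℂ} (hM : M.PosSemidef)
    {a : ℝ} (ha : 0 ≤ a) : (a • M).PosSemidef := by
  constructor
  · have h1 := hM.1
    show (a • M)ᴴ = a • M
    rw [Matrix.conjTranspose_smul, star_trivial, h1]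
  · intro v
    have h2 := hM.2 v
    have h3 : (v.sum fun i xi => v.sum fun j xj => star xi * (a • M) i j * xj)
        = (a : ℂ) * (v.sum fun i xi => v.sum fun j xj => star xi * M i j * xj) := by
      simp only [Finsupp.sum, Finset.mul_sum, Matrix.smul_apply, Complex.real_smul]
      refine Finset.sum_congr rfl fun i _ => Finset.sum_congr rfl fun j _ => ?_
      ring
    rw [h3]
    exact mul_nonneg (by exact_mod_cast ha) h2

end Aux

/-- For a moment functional `Λ` on `E` with representing measure `μ` and a point `x ∈ X`, there
is a finitely atomic representing measure `ν = Σ_j Mats_j δ_{pts_j}` of `Λ` with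
`ν({x}) = μ({x})`. -/
theorem stmt_16 {X : Type*} [MeasurableSpace X] [MeasurableSingletonClass X] [DecidableEq X]
    {q : ℕ} (E : Submodule ℝ (X → Matrix (Fin q) (Fin q) ℂ)) [FiniteDimensional ℝ E]
    (hmeas : ∀ F ∈ E, ∀ i j, Measurable fun x => F x i j)
    (hherm : ∀ F ∈ E, ∀ x, (F x).IsHermitian)
    (Λ : E →ₗ[ℝ] ℝ) (μ : MatMeasure X q) (hμ : Represents E Λ μ) (x : X) :
    ∃ (k : ℕ) (pts : Fin k → X) (Mats : Fin k → Matrix (Fin q) (Fin q) ℂ),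
      (∀ j, (Mats j).PosSemidef) ∧
      (∀ F : E, Λ F =
        ∑ j, (((F : X → Matrix (Fin q) (Fin q) ℂ) (pts j) * Mats j).trace).re) ∧
      (∑ j ∈ Finset.univ.filter fun j => pts j = x, Mats j)
        = (μ.τ {x}).toReal • μ.Φ x := by
  classical
  set c0 : ℝ := (μ.τ {x}).toReal with hc0def
  set ev : X → E →ₗ[ℝ] ℝ := evp E μ.Φ with hevdef
  have hev : ∀ (y : X) (F : E),
      ev y F = (((F : X → Matrix (Fin q) (Fin q) ℂ) y * μ.Φ y).trace).re := fun y F => rfl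
  have hsplit : ∀ F : E, Λ F = c0 * ev x F + ∫ y in ({x}ᶜ : Set X), ev y F ∂μ.τ := by
    intro F
    have h1 : Λ F = ∫ y, ev y F ∂μ.τ := hμ.2 F
    have h2 : Integrable (fun y => ev y F) μ.τ := hμ.1 F
    rw [h1, ← integral_add_compl (measurableSet_singleton x) h2]
    congr 1
    have h3 : ∫ y in ({x} : Set X), ev y F ∂μ.τ = c0 • ev x F := by
      rw [Measure.restrict_singleton, integral_smul_measure, integral_dirac]
    rw [h3, smul_eq_mul]
  set m := finrank ℝ E with hmdef
  set B : Basis (Fin m) ℝ E := finBasis ℝ E with hBdef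
  set fV : X → EuclideanSpace ℝ (Fin m) := fun y => WithLp.toLp 2 (fun i => ev y (B i)) with hfVdef
  set Λ' : E →ₗ[ℝ] ℝ := Λ - c0 • ev x with hΛ'def
  set vV : EuclideanSpace ℝ (Fin m) := WithLp.toLp 2 (fun i => Λ' (B i)) with hvVdef
  have hΛ'app : ∀ F : E, Λ' F = Λ F - c0 * ev x F := fun F => rfl
  have hΛ' : ∀ F : E, Λ' F = ∫ y in ({x}ᶜ : Set X), ev y F ∂μ.τ := by
    intro F
    rw [hΛ'app, hsplit F]
    ring
  have hip : ∀ a b : EuclideanSpace ℝ (Fin m), ⟪a, b⟫ = ∑ i, a i * b i := by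
    intro a b
    rw [PiLp.inner_apply]
    refine Finset.sum_congr rfl fun i _ => ?_
    rw [RCLike.inner_apply, starRingEnd_apply, star_trivial, mul_comm]
  have hFw : ∀ (w : EuclideanSpace ℝ (Fin m)) (y : X),
      ⟪fV y, w⟫ = ev y (∑ i, w i • B i) := by
    intro w y
    rw [hip, map_sum]
    refine Finset.sum_congr rfl fun i _ => ?_
    rw [_root_.map_smul, smul_eq_mul, mul_comm]
  have hvw : ∀ w : EuclideanSpace ℝ (Fin m), ⟪vV, w⟫ = Λ' (∑ i, w i • B i) := by
    intro w
    rw [hip, map_sum]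
    refine Finset.sum_congr rfl fun i _ => ?_
    rw [_root_.map_smul, smul_eq_mul, mul_comm]
  have hS : MeasurableSet ({x}ᶜ : Set X) := (measurableSet_singleton x).compl
  obtain ⟨k, p, c, hpS, hcnn, hsum⟩ :=
    richter_s16 m (EuclideanSpace ℝ (Fin m)) (le_of_eq finrank_euclideanSpace_fin)
      X μ.τ ({x}ᶜ : Set X) hS fV
      (by
        intro w
        have h4 : (fun y => ⟪fV y, w⟫) = fun y => ev y (∑ i, w i • B i) :=
          funext fun y => hFw w y
        rw [h4]
        exact evp_measurable E hmeas μ.Φ μ.measurable_entry _)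
      (by
        intro w
        have h4 : (fun y => ⟪fV y, w⟫) = fun y => ev y (∑ i, w i • B i) :=
          funext fun y => hFw w y
        rw [h4]
        exact (hμ.1 _).restrict)
      vV
      (by
        intro w
        have h4 : (fun y => ⟪fV y, w⟫) = fun y => ev y (∑ i, w i • B i) :=
          funext fun y => hFw w y
        rw [h4, hvw w, hΛ'])
  have hrep : ∀ F : E, Λ' F = ∑ j, c j * ev (p j) F := by
    intro F
    have hF : (∑ i, (B.repr F) i • B i) = F := B.sum_repr F
    have h6 : ⟪vV, (WithLp.toLp 2 (B.repr F) : EuclideanSpace ℝ (Fin m))⟫ = Λ' F := by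
      rw [hvw]
      simp only [PiLp.toLp_apply]
      rw [hF]
    have h7 : ⟪vV, (WithLp.toLp 2 (B.repr F) : EuclideanSpace ℝ (Fin m))⟫
        = ∑ j, c j * ev (p j) F := by
      rw [hsum, sum_inner]
      refine Finset.sum_congr rfl fun j _ => ?_
      rw [real_inner_smul_left, hFw]
      simp only [PiLp.toLp_apply]
      rw [hF]
    rw [← h6, h7]
  have hterm : ∀ (F : E) (y : X) (a : ℝ),
      (((F : X → Matrix (Fin q) (Fin q) ℂ) y * (a • μ.Φ y)).trace).re = a * ev y F := by
    intro F y a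
    rw [Matrix.mul_smul, Matrix.trace_smul, Complex.smul_re, hev, smul_eq_mul]
  have hne : ∀ i : Fin k, p i ≠ x := fun i => by
    have h8 := hpS i
    simpa using h8
  refine ⟨k + 1, Fin.snoc p x,
    Fin.snoc (fun j => c j • μ.Φ (p j)) (c0 • μ.Φ x), ?_, ?_, ?_⟩
  · intro j
    induction j using Fin.lastCases with
    | last =>
      rw [Fin.snoc_last]
      exact posSemidef_real_smul (μ.posSemidef x) ENNReal.toReal_nonneg
    | cast i =>
      rw [Fin.snoc_castSucc]
      exact posSemidef_real_smul (μ.posSemidef (p i)) (hcnn i)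
  · intro F
    rw [Fin.sum_univ_castSucc]
    simp only [Fin.snoc_castSucc, Fin.snoc_last]
    have h9 : ∀ i : Fin k,
        (((F : X → Matrix (Fin q) (Fin q) ℂ) (p i) * (c i • μ.Φ (p i))).trace).re
          = c i * ev (p i) F := fun i => hterm F (p i) (c i)
    rw [Finset.sum_congr rfl fun i _ => h9 i, hterm F x c0, ← hrep F, hΛ'app]
    ring
  · have hfilter : (Finset.univ.filter fun j => (Fin.snoc p x : Fin (k + 1) → X) j = x) = {Fin.last k} := by
      ext j
      simp only [Finset.mem_filter, Finset.mem_univ, true_and, Finset.mem_singleton]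
      induction j using Fin.lastCases with
      | last => simp [Fin.snoc_last]
      | cast i => simp [Fin.snoc_castSucc, hne i, (Fin.castSucc_lt_last i).ne]
    rw [hfilter, Finset.sum_singleton, Fin.snoc_last, hc0def]
end

section
/- Let Λ be a moment functional on E and x ∈ X. Then W(Λ;x) := ⋃_{μ ∈ M_Λ} ran(μ({x})) is a linear subspace of ℂ^q, and there exists a finitely atomic representing measure ν of Λ with W(Λ;x) = ran(ν({x})). -/
open Matrix MeasureTheory ComplexOrder
open scoped ENNReal NNReal

/-- `μ({x})`, the atom matrix of a positive `H_q`-valued measure at `x`. -/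
noncomputable def matAtom {X : Type*} [MeasurableSpace X] {q : ℕ}
    (μ : MatMeasure X q) (x : X) : Matrix (Fin q) (Fin q) ℂ :=
  (μ.τ {x}).toReal • μ.Φ x

section Aux
variable {X : Type*} [MeasurableSpace X]

/-- a function agreeing with a measurable function off a countable set is measurable -/
lemma measurable_off_countable [MeasurableSingletonClass X] {α : Type*} [MeasurableSpace α]
    {f g : X → α} {s : Set X} (hs : s.Countable) (hf : Measurable f)
    (h : ∀ p ∉ s, g p = f p) : Measurable g := by
  intro A hA
  have : g ⁻¹' A = (f ⁻¹' A \ s) ∪ (s ∩ g ⁻¹' A) := by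
    ext p
    by_cases hp : p ∈ s <;> simp [h, hp]
  rw [this]
  exact ((hf hA).diff hs.measurableSet).union
    ((hs.mono Set.inter_subset_left).measurableSet)

lemma meas_trace_re {q : ℕ} {F G : X → Matrix (Fin q) (Fin q) ℂ}
    (hF : ∀ i j, Measurable fun p => F p i j) (hG : ∀ i j, Measurable fun p => G p i j) :
    Measurable fun p => ((F p * G p).trace).re := by
  have : (fun p => (F p * G p).trace) = fun p => ∑ a, ∑ c, F p a c * G p c a := by
    funext p
    simp [Matrix.trace, Matrix.mul_apply, Matrix.diag]
  exact Complex.measurable_re.comp (by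
    rw [this]
    exact Finset.measurable_sum _ fun a _ =>
      Finset.measurable_sum _ fun c _ => (hF a c).mul (hG c a))

lemma integrable_dirac'' {f : X → ℝ} [MeasurableSingletonClass X] (hf : Measurable f) (p : X) :
    Integrable f (Measure.dirac p) := by
  refine ⟨hf.aestronglyMeasurable, ?_⟩
  rw [HasFiniteIntegral]
  rw [lintegral_dirac]
  exact ENNReal.coe_lt_top

lemma integral_singleton_eq (τ : Measure X) [MeasurableSingletonClass X] (f : X → ℝ) (a : X) :
    ∫ p in ({a} : Set X), f p ∂τ = (τ {a}).toReal * f a := by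
  rw [Measure.restrict_singleton, integral_smul_measure, integral_dirac]
  rfl

lemma integral_compl_finset [MeasurableSingletonClass X] (τ : Measure X) (P : Finset X)
    {f : X → ℝ} (hf : Integrable f τ) :
    ∫ p, f p ∂τ = (∫ p in ((↑P : Set X)ᶜ), f p ∂τ) + ∑ p ∈ P, (τ {p}).toReal * f p := by
  classical
  induction P using Finset.induction_on with
  | empty => simp
  | @insert a P ha ih =>
      rw [ih, Finset.sum_insert ha]
      have hsplit : ((↑P : Set X)ᶜ) = ((↑(insert a P) : Set X)ᶜ) ∪ ({a} : Set X) := by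
        ext p
        by_cases hp : p = a <;> simp [hp, ha]
      rw [hsplit, setIntegral_union ?disj (measurableSet_singleton a)
        (hf.integrableOn) (hf.integrableOn), integral_singleton_eq]
      · ring
      case disj =>
        rw [Set.disjoint_singleton_right]
        simp
end Aux



section PSD
variable {q : ℕ}

lemma herm_smul {c : ℝ} {M : Matrix (Fin q) (Fin q) ℂ} (hM : M.IsHermitian) :
    (c • M).IsHermitian := by
  ext i j
  simp only [Matrix.conjTranspose_apply, Matrix.smul_apply, star_smul, star_trivial]
  rw [← Matrix.conjTranspose_apply, hM.eq]

lemma psd_smul {c : ℝ} {M : Matrix (Fin q) (Fin q) ℂ} (hc : 0 ≤ c) (hM : M.PosSemidef) :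
    (c • M).PosSemidef := by
  refine posSemidef_iff_dotProduct_mulVec.2 ⟨?_, ?_⟩
  · exact herm_smul hM.1
  · intro v
    rw [Matrix.smul_mulVec, dotProduct_smul]
    have h0 : (0 : ℂ) ≤ star v ⬝ᵥ M *ᵥ v := (posSemidef_iff_dotProduct_mulVec.1 hM).2 v
    have : c • (star v ⬝ᵥ M *ᵥ v) = (c : ℂ) * (star v ⬝ᵥ M *ᵥ v) := by
      rw [Complex.real_smul]
    rw [this]
    exact mul_nonneg (by exact_mod_cast Complex.zero_le_real.2 hc) h0

lemma psd_sum {ι : Type*} (s : Finset ι) (f : ι → Matrix (Fin q) (Fin q) ℂ)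
    (h : ∀ i ∈ s, (f i).PosSemidef) : (∑ i ∈ s, f i).PosSemidef :=
  Finset.sum_induction f _ (fun _ _ ha hb => ha.add hb) (Matrix.PosSemidef.zero) h

lemma psd_ker_le {A B : Matrix (Fin q) (Fin q) ℂ} (hA : A.PosSemidef) (hB : B.PosSemidef)
    {w : Fin q → ℂ} (hw : (A + B) *ᵥ w = 0) : A *ᵥ w = 0 := by
  have h2 : star w ⬝ᵥ (A + B) *ᵥ w = 0 := by rw [hw, dotProduct_zero]
  rw [Matrix.add_mulVec, dotProduct_add] at h2
  have hA0 := (posSemidef_iff_dotProduct_mulVec.1 hA).2 w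
  have hB0 := (posSemidef_iff_dotProduct_mulVec.1 hB).2 w
  have : star w ⬝ᵥ A *ᵥ w = 0 := le_antisymm (by
    have := le_add_of_nonneg_right (a := star w ⬝ᵥ A *ᵥ w) hB0
    rw [h2] at this; exact this) hA0
  exact (hA.dotProduct_mulVec_zero_iff w).1 this

/-- for Hermitian M, `star w ⬝ᵥ M *ᵥ u = star (M *ᵥ w) ⬝ᵥ u` -/
lemma herm_dot {M : Matrix (Fin q) (Fin q) ℂ} (hM : M.IsHermitian) (w u : Fin q → ℂ) :
    star w ⬝ᵥ M *ᵥ u = star (M *ᵥ w) ⬝ᵥ u := by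
  rw [Matrix.star_mulVec, Matrix.dotProduct_mulVec, hM.eq]

/-- range inclusion for psd matrices -/
lemma psd_range_le {A B : Matrix (Fin q) (Fin q) ℂ} (hA : A.PosSemidef) (hB : B.PosSemidef) :
    LinearMap.range A.mulVecLin ≤ LinearMap.range (A + B).mulVecLin := by
  classical
  have hCpsd : (A + B).PosSemidef := hA.add hB
  let ψ := (WithLp.linearEquiv 2 ℂ (Fin q → ℂ)).symm
  let L : (Fin q → ℂ) →ₗ[ℂ] EuclideanSpace ℂ (Fin q) := ψ.toLinearMap
  have hinj : Function.Injective L := ψ.injective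
  let K : Submodule ℂ (EuclideanSpace ℂ (Fin q)) :=
    Submodule.map L (LinearMap.ker (A + B).mulVecLin)
  let R : Submodule ℂ (EuclideanSpace ℂ (Fin q)) :=
    Submodule.map L (LinearMap.range (A + B).mulVecLin)
  have hinner : ∀ (w v : Fin q → ℂ), (inner ℂ (L w) (L v) : ℂ) = star w ⬝ᵥ v := by
    intro w v
    simp only [PiLp.inner_apply, RCLike.inner_apply, dotProduct, Pi.star_apply,
      RCLike.star_def]
    exact Finset.sum_congr rfl fun i _ => mul_comm _ _
  have hRK : R ≤ Kᗮ := by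
    rintro _ ⟨z, ⟨u, rfl⟩, rfl⟩
    rintro _ ⟨w, hw, rfl⟩
    replace hw : (A + B) *ᵥ w = 0 := hw
    rw [hinner, Matrix.mulVecLin_apply, herm_dot hCpsd.1, hw]
    simp
  have hfinR : Module.finrank ℂ R = Module.finrank ℂ (LinearMap.range (A + B).mulVecLin) :=
    (LinearEquiv.finrank_eq
      (Submodule.equivMapOfInjective L hinj (LinearMap.range (A + B).mulVecLin))).symm
  have hfinK : Module.finrank ℂ K = Module.finrank ℂ (LinearMap.ker (A + B).mulVecLin) :=
    (LinearEquiv.finrank_eq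
      (Submodule.equivMapOfInjective L hinj (LinearMap.ker (A + B).mulVecLin))).symm
  have hfin1 : Module.finrank ℂ R + Module.finrank ℂ K = q := by
    rw [hfinR, hfinK]
    have := LinearMap.finrank_range_add_finrank_ker ((A + B).mulVecLin)
    rwa [Module.finrank_fin_fun] at this
  have hfin2 : Module.finrank ℂ K + Module.finrank ℂ Kᗮ = q := by
    have := Submodule.finrank_add_finrank_orthogonal K
    rwa [finrank_euclideanSpace_fin] at this
  have hReq : R = Kᗮ := Submodule.eq_of_le_of_finrank_le hRK (by omega)
  rintro _ ⟨u, rfl⟩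
  have hmem : L (A.mulVecLin u) ∈ Kᗮ := by
    rintro _ ⟨w, hw, rfl⟩
    replace hw : (A + B) *ᵥ w = 0 := hw
    rw [hinner, Matrix.mulVecLin_apply, herm_dot hA.1, psd_ker_le hA hB hw]
    simp
  rw [← hReq] at hmem
  obtain ⟨z, hz, hzeq⟩ := hmem
  have : z = A.mulVecLin u := hinj hzeq
  rwa [this] at hz

lemma ran_smul_ne {c : ℝ} (hc : c ≠ 0) (A : Matrix (Fin q) (Fin q) ℂ) :
    LinearMap.range (c • A).mulVecLin = LinearMap.range A.mulVecLin := by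
  ext v
  constructor
  · rintro ⟨u, rfl⟩
    exact ⟨c • u, by rw [Matrix.mulVecLin_apply, Matrix.mulVecLin_apply,
      Matrix.smul_mulVec, Matrix.mulVec_smul]⟩
  · rintro ⟨u, rfl⟩
    refine ⟨c⁻¹ • u, ?_⟩
    rw [Matrix.mulVecLin_apply, Matrix.mulVecLin_apply, Matrix.smul_mulVec,
      Matrix.mulVec_smul, smul_smul, mul_inv_cancel₀ hc, one_smul]
end PSD



set_option linter.unusedSectionVars false
section Richter
variable {X : Type*} [MeasurableSpace X]

/-- conic combinations of values of `g` at points of `s` -/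
def coneC {n : ℕ} (s : Set X) (g : X → (Fin n → ℝ)) : Set (Fin n → ℝ) :=
  {v | ∃ (k : ℕ) (p : Fin k → X) (c : Fin k → ℝ),
    (∀ j, 0 ≤ c j) ∧ (∀ j, p j ∈ s) ∧ ∑ j, c j • g (p j) = v}

lemma coneC_zero {n : ℕ} (s : Set X) (g : X → (Fin n → ℝ)) : (0 : Fin n → ℝ) ∈ coneC s g :=
  ⟨0, Fin.elim0, Fin.elim0, fun j => j.elim0, fun j => j.elim0, by simp⟩

lemma coneC_mem {n : ℕ} {s : Set X} {g : X → (Fin n → ℝ)} {p : X} (hp : p ∈ s) :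
    g p ∈ coneC s g :=
  ⟨1, fun _ => p, fun _ => 1, fun _ => zero_le_one, fun _ => hp, by simp⟩

lemma coneC_add {n : ℕ} {s : Set X} {g : X → (Fin n → ℝ)} {v w : Fin n → ℝ}
    (hv : v ∈ coneC s g) (hw : w ∈ coneC s g) : v + w ∈ coneC s g := by
  obtain ⟨k₁, p₁, c₁, h₁, m₁, rfl⟩ := hv
  obtain ⟨k₂, p₂, c₂, h₂, m₂, rfl⟩ := hw
  refine ⟨k₁ + k₂, Fin.append p₁ p₂, Fin.append c₁ c₂, ?_, ?_, ?_⟩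
  · intro j
    exact Fin.addCases (fun i => by rw [Fin.append_left]; exact h₁ i)
      (fun i => by rw [Fin.append_right]; exact h₂ i) j
  · intro j
    exact Fin.addCases (fun i => by rw [Fin.append_left]; exact m₁ i)
      (fun i => by rw [Fin.append_right]; exact m₂ i) j
  · rw [Fin.sum_univ_add]
    simp only [Fin.append_left, Fin.append_right]

lemma coneC_smul {n : ℕ} {s : Set X} {g : X → (Fin n → ℝ)} {v : Fin n → ℝ} {t : ℝ}
    (ht : 0 ≤ t) (hv : v ∈ coneC s g) : t • v ∈ coneC s g := by
  obtain ⟨k, p, c, h, m, rfl⟩ := hv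
  exact ⟨k, p, fun j => t * c j, fun j => mul_nonneg ht (h j), m, by
    rw [Finset.smul_sum]; exact Finset.sum_congr rfl fun j _ => (smul_smul t (c j) _).symm⟩

lemma coneC_convex {n : ℕ} (s : Set X) (g : X → (Fin n → ℝ)) : Convex ℝ (coneC s g) := by
  intro v hv w hw a b ha hb _
  exact coneC_add (coneC_smul ha hv) (coneC_smul hb hw)

end Richter

section Richter2
set_option linter.unusedSectionVars false
variable {X : Type*} [MeasurableSpace X]

lemma richter_descend {n : ℕ} (τ : Measure X) {s : Set X} (hs : MeasurableSet s)
    (g : X → (Fin n → ℝ)) (hgm : Measurable g) (hgi : Integrable g (τ.restrict s))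
    (K : Submodule ℝ (Fin n → ℝ)) (hgK : ∀ p ∈ s, g p ∈ K)
    (ih : ∀ (g' : X → (Fin (Module.finrank ℝ K) → ℝ)), Measurable g' →
      Integrable g' (τ.restrict s) →
      ∃ (k : ℕ) (p : Fin k → X) (c : Fin k → ℝ), (∀ j, 0 ≤ c j) ∧ (∀ j, p j ∈ s) ∧
        ∫ x, g' x ∂(τ.restrict s) = ∑ j, c j • g' (p j)) :
    ∃ (k : ℕ) (p : Fin k → X) (c : Fin k → ℝ), (∀ j, 0 ≤ c j) ∧ (∀ j, p j ∈ s) ∧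
      ∫ x, g x ∂(τ.restrict s) = ∑ j, c j • g (p j) := by
  obtain ⟨K', hKK'⟩ := Submodule.exists_isCompl K
  let e := (Module.finBasis ℝ K).equivFun
  let P : (Fin n → ℝ) →ₗ[ℝ] (Fin (Module.finrank ℝ K) → ℝ) :=
    e.toLinearMap ∘ₗ (K.linearProjOfIsCompl K' hKK')
  let J : (Fin (Module.finrank ℝ K) → ℝ) →ₗ[ℝ] (Fin n → ℝ) :=
    K.subtype ∘ₗ e.symm.toLinearMap
  let Pc : (Fin n → ℝ) →L[ℝ] (Fin (Module.finrank ℝ K) → ℝ) :=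
    LinearMap.toContinuousLinearMap P
  let Jc : (Fin (Module.finrank ℝ K) → ℝ) →L[ℝ] (Fin n → ℝ) :=
    LinearMap.toContinuousLinearMap J
  have hJP : ∀ v ∈ K, Jc (Pc v) = v := by
    intro v hv
    show J (P v) = v
    have h1 : K.linearProjOfIsCompl K' hKK' v = ⟨v, hv⟩ :=
      Submodule.linearProjOfIsCompl_apply_left hKK' ⟨v, hv⟩
    simp [P, J, h1]
  have hPm : Measurable fun x => Pc (g x) := Pc.continuous.measurable.comp hgm
  have hPi : Integrable (fun x => Pc (g x)) (τ.restrict s) := Pc.integrable_comp hgi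
  obtain ⟨k, p, c, hc, hmem, hsum⟩ := ih _ hPm hPi
  refine ⟨k, p, c, hc, hmem, ?_⟩
  have h1 : ∫ x, Pc (g x) ∂(τ.restrict s) = Pc (∫ x, g x ∂(τ.restrict s)) :=
    Pc.integral_comp_comm hgi
  have h2 := congrArg Jc hsum
  rw [h1] at h2
  have h3 : Jc (Pc (∫ x, g x ∂(τ.restrict s))) = ∫ x, g x ∂(τ.restrict s) := by
    have h4 : ((Jc.comp Pc) (∫ x, g x ∂(τ.restrict s)))
        = ∫ x, (Jc.comp Pc) (g x) ∂(τ.restrict s) := ((Jc.comp Pc).integral_comp_comm hgi).symm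
    have h5 : ∫ x, (Jc.comp Pc) (g x) ∂(τ.restrict s) = ∫ x, g x ∂(τ.restrict s) := by
      refine integral_congr_ae ?_
      filter_upwards [ae_restrict_mem hs] with x hx
      exact hJP (g x) (hgK x hx)
    calc Jc (Pc (∫ x, g x ∂(τ.restrict s))) = (Jc.comp Pc) (∫ x, g x ∂(τ.restrict s)) := rfl
      _ = _ := h4.trans h5
  rw [h3] at h2
  rw [h2, _root_.map_sum]
  refine Finset.sum_congr rfl fun j _ => ?_
  rw [_root_.map_smul, hJP _ (hgK _ (hmem j))]

end Richter2

section Richter3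
set_option linter.unusedSectionVars false
variable {X : Type*} [MeasurableSpace X]

theorem richter_s17 : ∀ (n : ℕ) (τ : Measure X) (s : Set X), MeasurableSet s →
    ∀ (g : X → Fin n → ℝ), Measurable g → Integrable g (τ.restrict s) →
    ∃ (k : ℕ) (p : Fin k → X) (c : Fin k → ℝ), (∀ j, 0 ≤ c j) ∧ (∀ j, p j ∈ s) ∧
      ∫ x, g x ∂(τ.restrict s) = ∑ j, c j • g (p j) := by
  intro n
  induction n using Nat.strong_induction_on with
  | _ n IH =>
  intro τ s hs g hgm hgi
  by_cases hb : (∫ x, g x ∂(τ.restrict s)) ∈ coneC s g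
  · obtain ⟨k, p, c, h1, h2, h3⟩ := hb
    exact ⟨k, p, c, h1, h2, h3.symm⟩
  by_cases hV : Submodule.span ℝ (g '' s) = ⊤
  · -- the separating-functional case
    set C := coneC s g with hCdef
    have hC : Convex ℝ C := coneC_convex s g
    have h0C : (0 : Fin n → ℝ) ∈ C := coneC_zero s g
    have hsubC : g '' s ⊆ C := by
      rintro _ ⟨p, hp, rfl⟩; exact coneC_mem hp
    have hspanC : affineSpan ℝ C = ⊤ := by
      have hcoe : (affineSpan ℝ C : Set (Fin n → ℝ)) = Set.univ := by
        have h1 : (affineSpan ℝ (insert 0 C) : Set (Fin n → ℝ)) = Submodule.span ℝ C :=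
          affineSpan_insert_zero C
        rw [Set.insert_eq_self.mpr h0C] at h1
        rw [h1]
        have h2 : Submodule.span ℝ C = ⊤ := by
          rw [eq_top_iff, ← hV]
          exact Submodule.span_mono hsubC
        rw [h2]; rfl
      rw [eq_top_iff]
      intro p _
      show p ∈ (affineSpan ℝ C : Set (Fin n → ℝ))
      rw [hcoe]; trivial
    obtain ⟨a₀, ha₀⟩ : (interior C).Nonempty :=
      (hC.interior_nonempty_iff_affineSpan_eq_top).2 hspanC
    obtain ⟨f, hf⟩ := geometric_hahn_banach_open_point hC.interior isOpen_interior
      (fun h => hb (interior_subset h))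
    set b := ∫ x, g x ∂(τ.restrict s) with hbdef
    have haddint : ∀ v ∈ interior C, ∀ w ∈ C, v + w ∈ interior C := by
      intro v hv w hw
      have h1 : (fun y => y + w) '' interior C ⊆ interior ((fun y => y + w) '' C) :=
        (isOpenMap_add_right w).image_interior_subset _
      have h2 : (fun y => y + w) '' C ⊆ C := by
        rintro _ ⟨z, hz, rfl⟩; exact coneC_add hz hw
      exact (h1.trans (interior_mono h2)) ⟨v, hv, rfl⟩
    have hsmulint : ∀ t : ℝ, 0 < t → t • a₀ ∈ interior C := by
      intro t ht
      have h1 : (fun y : Fin n → ℝ => t • y) '' interior C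
          ⊆ interior ((fun y : Fin n → ℝ => t • y) '' C) :=
        (isOpenMap_smul₀ (ne_of_gt ht)).image_interior_subset _
      have h2 : (fun y : Fin n → ℝ => t • y) '' C ⊆ C := by
        rintro _ ⟨z, hz, rfl⟩; exact coneC_smul ht.le hz
      exact (h1.trans (interior_mono h2)) ⟨a₀, ha₀, rfl⟩
    have hfa₀ : f a₀ < f b := hf a₀ ha₀
    have hfb : 0 ≤ f b := by
      by_contra hneg
      push_neg at hneg
      have h1 : ∀ t : ℝ, 0 < t → t * f a₀ ≤ f b := fun t ht => by
        have := hf _ (hsmulint t ht)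
        rw [_root_.map_smul, smul_eq_mul] at this
        exact this.le
      have h2 : Filter.Tendsto (fun t : ℝ => t * f a₀) (nhdsWithin 0 (Set.Ioi 0))
          (nhds (0 * f a₀)) :=
        ((continuous_id.mul continuous_const).tendsto 0).mono_left nhdsWithin_le_nhds
      rw [zero_mul] at h2
      have := le_of_tendsto h2 (eventually_nhdsWithin_of_forall h1)
      exact absurd this (not_le.2 hneg)
    have hfg : ∀ p ∈ s, f (g p) ≤ 0 := by
      intro p hp
      by_contra hpos
      push_neg at hpos
      have h1 : ∀ t : ℝ, 0 ≤ t → f a₀ + t * f (g p) < f b := fun t ht => by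
        have hmem := haddint a₀ ha₀ _ (coneC_smul ht (coneC_mem hp))
        have := hf _ hmem
        rwa [map_add, _root_.map_smul, smul_eq_mul] at this
      have hnn : 0 ≤ (f b - f a₀) / f (g p) := div_nonneg (by linarith) hpos.le
      have h2 := h1 ((f b - f a₀) / f (g p) + 1) (by linarith)
      have h3 : ((f b - f a₀) / f (g p) + 1) * f (g p) = (f b - f a₀) + f (g p) := by
        field_simp
      rw [h3] at h2
      linarith
    -- integral of f ∘ g vanishes a.e.
    have hfgi : Integrable (fun x => f (g x)) (τ.restrict s) := f.integrable_comp hgi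
    have hintfg : ∫ x, f (g x) ∂(τ.restrict s) = f b := f.integral_comp_comm hgi
    have hle : ∫ x, f (g x) ∂(τ.restrict s) ≤ 0 := by
      refine integral_nonpos_of_ae ?_
      filter_upwards [ae_restrict_mem hs] with p hp
      exact hfg p hp
    have hzero : (fun x => - f (g x)) =ᵐ[τ.restrict s] 0 := by
      have hnn : 0 ≤ᵐ[τ.restrict s] fun x => - f (g x) := by
        filter_upwards [ae_restrict_mem hs] with p hp
        simpa using hfg p hp
      have hint0 : ∫ x, - f (g x) ∂(τ.restrict s) = 0 := by
        rw [integral_neg, hintfg]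
        have : f b ≤ 0 := hintfg ▸ hle
        linarith [hfb, this]
      exact (integral_eq_zero_iff_of_nonneg_ae hnn hfgi.neg).1 hint0
    have haemem : ∀ᵐ x ∂(τ.restrict s), x ∈ {y | f (g y) = 0} := by
      filter_upwards [hzero] with p hp
      have : - f (g p) = 0 := hp
      simpa using this
    have hA : MeasurableSet {y | f (g y) = 0} :=
      (f.continuous.measurable.comp hgm) (measurableSet_singleton 0)
    have hres : τ.restrict ({y | f (g y) = 0} ∩ s) = τ.restrict s := by
      rw [← Measure.restrict_restrict hA]
      exact Measure.restrict_eq_self_of_ae_mem haemem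
    have hfne : ∃ v, f v ≠ 0 := by
      by_contra hall
      push_neg at hall
      rw [hall a₀, hall b] at hfa₀
      exact lt_irrefl _ hfa₀
    have hkerlt : Module.finrank ℝ (LinearMap.ker (f : (Fin n → ℝ) →ₗ[ℝ] ℝ)) < n := by
      have h1 : LinearMap.ker (f : (Fin n → ℝ) →ₗ[ℝ] ℝ) < ⊤ := by
        rw [lt_top_iff_ne_top]
        intro hcon
        obtain ⟨v, hv⟩ := hfne
        have : v ∈ LinearMap.ker (f : (Fin n → ℝ) →ₗ[ℝ] ℝ) := hcon ▸ Submodule.mem_top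
        exact hv this
      have := Submodule.finrank_lt h1.ne
      rwa [Module.finrank_fin_fun] at this
    obtain ⟨k, p, c, h1, h2, h3⟩ := richter_descend τ (hA.inter hs) g hgm
      (by rw [hres]; exact hgi) (LinearMap.ker (f : (Fin n → ℝ) →ₗ[ℝ] ℝ))
      (fun p hp => hp.1) (fun g' hm hi => IH _ hkerlt τ _ (hA.inter hs) g' hm hi)
    rw [hres] at h3
    exact ⟨k, p, c, h1, fun j => (h2 j).2, h3⟩
  · -- the proper-span case
    have hlt : Module.finrank ℝ (Submodule.span ℝ (g '' s)) < n := by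
      have := Submodule.finrank_lt (lt_top_iff_ne_top.2 hV).ne
      rwa [Module.finrank_fin_fun] at this
    exact richter_descend τ hs g hgm hgi (Submodule.span ℝ (g '' s))
      (fun p hp => Submodule.subset_span (Set.mem_image_of_mem g hp))
      (fun g' hm hi => IH _ hlt τ s hs g' hm hi)

end Richter3




section Main
set_option linter.unusedSectionVars false
set_option maxHeartbeats 1000000
variable {X : Type*} [MeasurableSpace X] {q : ℕ}

lemma tr_smul_re (A M : Matrix (Fin q) (Fin q) ℂ) (c : ℝ) :
    ((A * (c • M)).trace).re = c * ((A * M).trace).re := by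
  rw [Matrix.mul_smul, Matrix.trace_smul, Complex.smul_re, smul_eq_mul]

/-- evaluation functional `F ↦ Re tr (F(p) M)` on `E` -/
noncomputable def evL (E : Submodule ℝ (X → Matrix (Fin q) (Fin q) ℂ)) (p : X)
    (M : Matrix (Fin q) (Fin q) ℂ) : E →ₗ[ℝ] ℝ where
  toFun F := (((F : X → Matrix (Fin q) (Fin q) ℂ) p * M).trace).re
  map_add' F G := by
    show ((((F + G : E) : X → Matrix (Fin q) (Fin q) ℂ)) p * M).trace.re = _
    have h : ((F + G : E) : X → Matrix (Fin q) (Fin q) ℂ) p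
        = (F : X → Matrix (Fin q) (Fin q) ℂ) p + (G : X → Matrix (Fin q) (Fin q) ℂ) p := rfl
    rw [h, Matrix.add_mul, Matrix.trace_add, Complex.add_re]
  map_smul' r F := by
    show ((((r • F : E) : X → Matrix (Fin q) (Fin q) ℂ)) p * M).trace.re = _
    have h : ((r • F : E) : X → Matrix (Fin q) (Fin q) ℂ) p
        = r • (F : X → Matrix (Fin q) (Fin q) ℂ) p := rfl
    rw [h, Matrix.smul_mul, Matrix.trace_smul, Complex.smul_re, smul_eq_mul]
    rfl

end Main
section Combine
set_option linter.unusedSectionVars false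
set_option maxHeartbeats 1000000
variable {X : Type*} [MeasurableSpace X] [MeasurableSingletonClass X] [DecidableEq X] {q : ℕ}

lemma combine_measure (E : Submodule ℝ (X → Matrix (Fin q) (Fin q) ℂ)) (Λ : E →ₗ[ℝ] ℝ)
    (hmeas : ∀ F ∈ E, ∀ i j, Measurable fun x => F x i j)
    (μ : MatMeasure X q) (hμ : Represents E Λ μ)
    {k : ℕ} (pts : Fin k → X) (Mats : Fin k → Matrix (Fin q) (Fin q) ℂ)
    (hPSD : ∀ j, (Mats j).PosSemidef)
    (hrepfin : ∀ F : E, Λ F =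
      ∑ j, (((F : X → Matrix (Fin q) (Fin q) ℂ) (pts j) * Mats j).trace).re)
    (x : X) (hx : ∃ j, pts j = x) :
    ∃ ρ : MatMeasure X q, Represents E Λ ρ ∧
      matAtom ρ x = (2⁻¹ : ℝ) • matAtom μ x +
        (2⁻¹ : ℝ) • (∑ j ∈ Finset.univ.filter fun j => pts j = x, Mats j) := by
  classical
  set P : Finset X := Finset.univ.image pts with hPdef
  have hxP : x ∈ P := by
    obtain ⟨j, hj⟩ := hx
    exact Finset.mem_image.2 ⟨j, Finset.mem_univ j, hj⟩
  set N : X → Matrix (Fin q) (Fin q) ℂ := fun p =>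
    (2⁻¹ : ℝ) • ((μ.τ {p}).toReal • μ.Φ p) +
    (2⁻¹ : ℝ) • ∑ j ∈ Finset.univ.filter (fun j => pts j = p), Mats j with hNdef
  set Φρ : X → Matrix (Fin q) (Fin q) ℂ := fun p => if p ∈ P then N p else μ.Φ p with hΦρdef
  set τρ : Measure X :=
    (2⁻¹ : ℝ≥0∞) • μ.τ.restrict ((↑P : Set X)ᶜ) + ∑ p ∈ P, Measure.dirac p with hτρdef
  have hΦρmeas : ∀ i j, Measurable fun p => Φρ p i j := by
    intro i j
    refine measurable_off_countable (P.finite_toSet.countable) (μ.measurable_entry i j) ?_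
    intro p hp
    simp only [Φρ]
    rw [if_neg (by simpa using hp)]
  have hΦρpsd : ∀ p, (Φρ p).PosSemidef := by
    intro p
    by_cases hp : p ∈ P
    · simp only [Φρ]
      rw [if_pos hp]
      exact (psd_smul (by norm_num) (psd_smul ENNReal.toReal_nonneg (μ.posSemidef p))).add
        (psd_smul (by norm_num) (psd_sum _ _ fun j _ => hPSD j))
    · simp only [Φρ]
      rw [if_neg hp]
      exact μ.posSemidef p
  have hfmeas : ∀ F : E, Measurable fun p =>
      (((F : X → Matrix (Fin q) (Fin q) ℂ) p * Φρ p).trace).re :=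
    fun F => meas_trace_re (hmeas F F.2) hΦρmeas
  have hPmeas : MeasurableSet ((↑P : Set X)ᶜ) := P.finite_toSet.measurableSet.compl
  have hcongr : ∀ F : E, (fun p => (((F : X → Matrix (Fin q) (Fin q) ℂ) p * μ.Φ p).trace).re)
      =ᵐ[μ.τ.restrict ((↑P : Set X)ᶜ)]
      (fun p => (((F : X → Matrix (Fin q) (Fin q) ℂ) p * Φρ p).trace).re) := by
    intro F
    filter_upwards [ae_restrict_mem hPmeas] with p hp
    have : Φρ p = μ.Φ p := by
      simp only [Φρ]
      rw [if_neg (by simpa using hp)]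
    rw [this]
  have hIres : ∀ F : E, Integrable
      (fun p => (((F : X → Matrix (Fin q) (Fin q) ℂ) p * Φρ p).trace).re)
      ((2⁻¹ : ℝ≥0∞) • μ.τ.restrict ((↑P : Set X)ᶜ)) := fun F =>
    (((hμ.1 F).restrict).congr (hcongr F)).smul_measure (by simp)
  have hIsum : ∀ F : E, Integrable
      (fun p => (((F : X → Matrix (Fin q) (Fin q) ℂ) p * Φρ p).trace).re)
      (∑ p ∈ P, Measure.dirac p) := fun F =>
    integrable_finset_sum_measure.2 fun p _ => integrable_dirac'' (hfmeas F) p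
  have hI : ∀ F : E, Integrable
      (fun p => (((F : X → Matrix (Fin q) (Fin q) ℂ) p * Φρ p).trace).re) τρ :=
    fun F => (hIres F).add_measure (hIsum F)
  have hint : ∀ F : E, ∫ p, (((F : X → Matrix (Fin q) (Fin q) ℂ) p * Φρ p).trace).re ∂τρ
      = Λ F := by
    intro F
    rw [hτρdef, integral_add_measure (hIres F) (hIsum F), integral_smul_measure,
      integral_finset_sum_measure fun p _ => integrable_dirac'' (hfmeas F) p]
    simp only [integral_dirac]
    have h1 : ∫ p in ((↑P : Set X)ᶜ),
        (((F : X → Matrix (Fin q) (Fin q) ℂ) p * Φρ p).trace).re ∂μ.τ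
        = ∫ p in ((↑P : Set X)ᶜ),
        (((F : X → Matrix (Fin q) (Fin q) ℂ) p * μ.Φ p).trace).re ∂μ.τ :=
      (integral_congr_ae (hcongr F)).symm
    have h2 : ∀ p ∈ P, (((F : X → Matrix (Fin q) (Fin q) ℂ) p * Φρ p).trace).re
        = 2⁻¹ * ((μ.τ {p}).toReal *
            (((F : X → Matrix (Fin q) (Fin q) ℂ) p * μ.Φ p).trace).re)
          + 2⁻¹ * ∑ j ∈ Finset.univ.filter (fun j => pts j = p),
            (((F : X → Matrix (Fin q) (Fin q) ℂ) p * Mats j).trace).re := by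
      intro p hp
      have hval : Φρ p = N p := by
        simp only [Φρ]
        rw [if_pos hp]
      rw [hval, hNdef]
      rw [Matrix.mul_add, Matrix.trace_add, Complex.add_re, tr_smul_re, tr_smul_re, tr_smul_re]
      congr 1
      rw [Matrix.mul_sum, Matrix.trace_sum, Complex.re_sum]
    rw [Finset.sum_congr rfl h2, Finset.sum_add_distrib]
    have h3 : ∑ p ∈ P, 2⁻¹ * ∑ j ∈ Finset.univ.filter (fun j => pts j = p),
        (((F : X → Matrix (Fin q) (Fin q) ℂ) p * Mats j).trace).re
        = 2⁻¹ * ∑ j, (((F : X → Matrix (Fin q) (Fin q) ℂ) (pts j) * Mats j).trace).re := by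
      rw [← Finset.mul_sum]
      congr 1
      rw [← Finset.sum_fiberwise_of_maps_to
        (fun j _ => Finset.mem_image_of_mem pts (Finset.mem_univ j))
        (fun j => (((F : X → Matrix (Fin q) (Fin q) ℂ) (pts j) * Mats j).trace).re)]
      refine Finset.sum_congr rfl fun p hp => Finset.sum_congr rfl fun j hj => ?_
      rw [(Finset.mem_filter.1 hj).2]
    rw [h3]
    have h4 := integral_compl_finset μ.τ P (hμ.1 F)
    have h5 := hμ.2 F
    have h6 := hrepfin F
    have h7 : ((2 : ℝ≥0∞)⁻¹).toReal = (2 : ℝ)⁻¹ := by simp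
    rw [h1, h7, smul_eq_mul]
    rw [← Finset.mul_sum]
    rw [h5, h4] at *
    rw [← h6] at *
    rw [h5]
    ring
  refine ⟨⟨τρ, Φρ, hΦρmeas, hΦρpsd⟩, ⟨fun F => hI F, fun F => (hint F).symm⟩, ?_⟩
  show (τρ {x}).toReal • Φρ x = _
  have hτρx : τρ {x} = 1 := by
    rw [hτρdef, Measure.add_apply, Measure.smul_apply,
      Measure.restrict_apply (measurableSet_singleton x), Measure.finset_sum_apply]
    have h7 : ({x} : Set X) ∩ ((↑P : Set X)ᶜ) = ∅ := by
      ext p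
      simp only [Set.mem_inter_iff, Set.mem_singleton_iff, Set.mem_compl_iff, Finset.mem_coe,
        Set.mem_empty_iff_false, iff_false, not_and, not_not]
      rintro rfl
      exact hxP
    rw [h7, measure_empty, smul_zero, zero_add]
    have h8 : ∀ p ∈ P, Measure.dirac p ({x} : Set X) = if p = x then 1 else 0 := by
      intro p hp
      rw [Measure.dirac_apply]
      simp [Set.indicator_apply]
    rw [Finset.sum_congr rfl h8, Finset.sum_ite_eq' P x fun _ => (1 : ℝ≥0∞), if_pos hxP]
  rw [hτρx]
  simp only [ENNReal.toReal_one, one_smul]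
  have hval : Φρ x = N x := by
    simp only [Φρ]
    rw [if_pos hxP]
  rw [hval]
  rfl
end Combine

/-- For a moment functional `Λ` on `E` and `x ∈ X`, the set
`W(Λ; x) = ⋃_{μ ∈ M_Λ} ran μ({x})` is a linear subspace of `ℂ^q`, and there is a finitely
atomic representing measure `ν = Σ_j Mats_j δ_{pts_j}` of `Λ` with `W(Λ; x) = ran ν({x})`. -/
theorem stmt_17 {X : Type*} [MeasurableSpace X] [MeasurableSingletonClass X] [DecidableEq X]
    {q : ℕ} (E : Submodule ℝ (X → Matrix (Fin q) (Fin q) ℂ)) [FiniteDimensional ℝ E]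
    (hmeas : ∀ F ∈ E, ∀ i j, Measurable fun x => F x i j)
    (hherm : ∀ F ∈ E, ∀ x, (F x).IsHermitian)
    (Λ : E →ₗ[ℝ] ℝ) (hΛ : ∃ μ : MatMeasure X q, Represents E Λ μ) (x : X) :
    (∃ S : Submodule ℂ (Fin q → ℂ),
      (S : Set (Fin q → ℂ)) = {v | ∃ μ : MatMeasure X q, Represents E Λ μ ∧
        ∃ u, (matAtom μ x).mulVec u = v}) ∧
    ∃ (k : ℕ) (pts : Fin k → X) (Mats : Fin k → Matrix (Fin q) (Fin q) ℂ),
      (∀ j, (Mats j).PosSemidef) ∧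
      (∀ F : E, Λ F =
        ∑ j, (((F : X → Matrix (Fin q) (Fin q) ℂ) (pts j) * Mats j).trace).re) ∧
      {v | ∃ μ : MatMeasure X q, Represents E Λ μ ∧ ∃ u, (matAtom μ x).mulVec u = v}
        = {v | ∃ u, (∑ j ∈ Finset.univ.filter fun j => pts j = x, Mats j).mulVec u = v} := by
  obtain ⟨μ₀, hμ₀⟩ := hΛ
  -- choose a representing measure of maximal atom rank at x
  set rk : MatMeasure X q → ℕ :=
    fun μ => Module.finrank ℂ (LinearMap.range (matAtom μ x).mulVecLin) with hrkdef
  set R : Set ℕ := {m | ∃ μ : MatMeasure X q, Represents E Λ μ ∧ rk μ = m} with hRdef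
  have hRne : R.Nonempty := ⟨rk μ₀, μ₀, hμ₀, rfl⟩
  have hRbdd : BddAbove R := by
    refine ⟨q, ?_⟩
    rintro m ⟨μ, _, rfl⟩
    have h := Submodule.finrank_le (LinearMap.range (matAtom μ x).mulVecLin)
    rwa [Module.finrank_fin_fun] at h
  obtain ⟨μs, hμs, hμsrk⟩ : ∃ μ : MatMeasure X q, Represents E Λ μ ∧ rk μ = sSup R :=
    Nat.sSup_mem hRne hRbdd
  have hmaxrk : ∀ μ : MatMeasure X q, Represents E Λ μ → rk μ ≤ sSup R :=
    fun μ h => le_csSup hRbdd ⟨μ, h, rfl⟩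
  -- basis of E and the associated vector-valued density
  set n := Module.finrank ℝ E with hndef
  set B : Module.Basis (Fin n) ℝ E := Module.finBasis ℝ E with hBdef
  set g : X → Fin n → ℝ := fun p i =>
    (((B i : X → Matrix (Fin q) (Fin q) ℂ) p * μs.Φ p).trace).re with hgdef
  have hgm : Measurable g :=
    measurable_pi_lambda _ fun i => meas_trace_re (hmeas (B i) (B i).2) μs.measurable_entry
  have hgi : Integrable g (μs.τ.restrict ({x}ᶜ)) := by
    have hcoord : ∀ i, Integrable (fun p => g p i) (μs.τ.restrict ({x}ᶜ)) :=
      fun i => (hμs.1 (B i)).restrict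
    have hbound : Integrable (fun p => ∑ i, |g p i|) (μs.τ.restrict ({x}ᶜ)) :=
      integrable_finset_sum _ fun i _ => (hcoord i).abs
    refine hbound.mono' hgm.aestronglyMeasurable ?_
    refine Filter.Eventually.of_forall fun p => ?_
    have hnn : (0 : ℝ) ≤ ∑ i, |g p i| := Finset.sum_nonneg fun i _ => abs_nonneg _
    refine (pi_norm_le_iff_of_nonneg hnn).2 fun i => ?_
    rw [Real.norm_eq_abs]
    exact Finset.single_le_sum (f := fun j => |g p j|) (fun j _ => abs_nonneg _) (Finset.mem_univ i)
  obtain ⟨k₀, p₀, c₀, hc₀, hp₀, hsum⟩ :=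
    richter_s17 n μs.τ ({x}ᶜ) (measurableSet_singleton x).compl g hgm hgi
  have hcoordsum : ∀ i, ∫ p in ({x}ᶜ : Set X), g p i ∂μs.τ = ∑ j, c₀ j * g (p₀ j) i := by
    intro i
    have h2 : ∫ p, g p i ∂(μs.τ.restrict ({x}ᶜ)) = (∫ p, g p ∂(μs.τ.restrict ({x}ᶜ))) i :=
      (ContinuousLinearMap.proj (R := ℝ) (φ := fun _ : Fin n => ℝ) i).integral_comp_comm hgi
    calc ∫ p in ({x}ᶜ : Set X), g p i ∂μs.τ
        = (∫ p, g p ∂(μs.τ.restrict ({x}ᶜ))) i := h2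
      _ = (∑ j, c₀ j • g (p₀ j)) i := by rw [hsum]
      _ = ∑ j, c₀ j * g (p₀ j) i := by simp
  -- the finitely atomic data
  set t := (μs.τ {x}).toReal with htdef
  set As := matAtom μs x with hAsdef
  have hAsPSD : As.PosSemidef := psd_smul ENNReal.toReal_nonneg (μs.posSemidef x)
  set k := k₀ + 1 with hkdef
  set pts : Fin k → X := Fin.snoc p₀ x with hptsdef
  set Mats : Fin k → Matrix (Fin q) (Fin q) ℂ :=
    Fin.snoc (fun j => c₀ j • μs.Φ (p₀ j)) As with hMatsdef
  have hMatsPSD : ∀ j, (Mats j).PosSemidef := by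
    intro j
    refine Fin.lastCases ?_ ?_ j
    · simp only [Mats, Fin.snoc_last]
      exact hAsPSD
    · intro i
      simp only [Mats, Fin.snoc_castSucc]
      exact psd_smul (hc₀ i) (μs.posSemidef _)
  have hrepfin : ∀ F : E, Λ F =
      ∑ j, (((F : X → Matrix (Fin q) (Fin q) ℂ) (pts j) * Mats j).trace).re := by
    have hbase : ∀ i : Fin n, Λ (B i) =
        ∑ j, (((B i : X → Matrix (Fin q) (Fin q) ℂ) (pts j) * Mats j).trace).re := by
      intro i
      rw [hμs.2 (B i)]
      rw [integral_compl_finset μs.τ {x} (hμs.1 (B i))]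
      rw [Finset.sum_singleton, Finset.coe_singleton]
      have hL : ∫ p in ({x} : Set X)ᶜ,
          (((B i : X → Matrix (Fin q) (Fin q) ℂ) p * μs.Φ p).trace).re ∂μs.τ
          = ∑ j, c₀ j * g (p₀ j) i := hcoordsum i
      rw [hL]
      rw [Fin.sum_univ_castSucc]
      have e1 : ∀ j : Fin k₀,
          (((B i : X → Matrix (Fin q) (Fin q) ℂ) (pts j.castSucc) * Mats j.castSucc).trace).re
          = c₀ j * g (p₀ j) i := by
        intro j
        simp only [pts, Mats, Fin.snoc_castSucc]
        exact tr_smul_re _ _ _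
      have e2 : (((B i : X → Matrix (Fin q) (Fin q) ℂ) (pts (Fin.last k₀))
          * Mats (Fin.last k₀)).trace).re = t * g x i := by
        simp only [pts, Mats, Fin.snoc_last]
        show (((B i : X → Matrix (Fin q) (Fin q) ℂ) x * (t • μs.Φ x)).trace).re = _
        exact tr_smul_re _ _ _
      rw [Finset.sum_congr rfl fun j _ => e1 j, e2]
    have hR : ∀ F : E, (∑ j, evL E (pts j) (Mats j)) F =
        ∑ j, (((F : X → Matrix (Fin q) (Fin q) ℂ) (pts j) * Mats j).trace).re := by
      intro F
      rw [LinearMap.sum_apply]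
      rfl
    have heq : Λ = ∑ j, evL E (pts j) (Mats j) := by
      refine B.ext fun i => ?_
      rw [hR]
      exact hbase i
    intro F
    rw [heq]
    exact hR F
  -- the sum of atoms sitting at x
  set Afin : Matrix (Fin q) (Fin q) ℂ :=
    ∑ j ∈ Finset.univ.filter (fun j => pts j = x), Mats j with hAfindef
  have hxpts : ∃ j, pts j = x := ⟨Fin.last k₀, by simp [pts, Fin.snoc_last]⟩
  have hAfinPSD : Afin.PosSemidef := psd_sum _ _ fun j _ => hMatsPSD j
  have hlastmem : Fin.last k₀ ∈ Finset.univ.filter (fun j => pts j = x) := by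
    simp [pts, Fin.snoc_last]
  have hAs_le : LinearMap.range As.mulVecLin ≤ LinearMap.range Afin.mulVecLin := by
    have hsplit : Afin = As +
        ∑ j ∈ (Finset.univ.filter (fun j => pts j = x)).erase (Fin.last k₀), Mats j := by
      rw [hAfindef, ← Finset.add_sum_erase _ _ hlastmem]
      congr 1
      simp [Mats, Fin.snoc_last]
    rw [hsplit]
    exact psd_range_le hAsPSD (psd_sum _ _ fun j _ => hMatsPSD j)
  -- convex combinations with the finitely atomic measure
  have hcomb : ∀ μ : MatMeasure X q, Represents E Λ μ → ∃ ρ : MatMeasure X q,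
      Represents E Λ ρ ∧ matAtom ρ x = (2⁻¹ : ℝ) • matAtom μ x + (2⁻¹ : ℝ) • Afin :=
    fun μ h => combine_measure E Λ hmeas μ h pts Mats hMatsPSD hrepfin x hxpts
  have hrhoeq : ∀ μ : MatMeasure X q, Represents E Λ μ → ∀ ρ : MatMeasure X q,
      Represents E Λ ρ → matAtom ρ x = (2⁻¹ : ℝ) • matAtom μ x + (2⁻¹ : ℝ) • Afin →
      LinearMap.range (matAtom ρ x).mulVecLin = LinearMap.range As.mulVecLin := by
    intro μ h ρ hρ hatom
    have hpsd1 : ((2⁻¹ : ℝ) • matAtom μ x).PosSemidef :=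
      psd_smul (by norm_num) (psd_smul ENNReal.toReal_nonneg (μ.posSemidef x))
    have hpsd2 : ((2⁻¹ : ℝ) • Afin).PosSemidef := psd_smul (by norm_num) hAfinPSD
    have h2 : LinearMap.range ((2⁻¹ : ℝ) • Afin).mulVecLin
        ≤ LinearMap.range (matAtom ρ x).mulVecLin := by
      rw [hatom, add_comm]
      exact psd_range_le hpsd2 hpsd1
    rw [ran_smul_ne (by norm_num : (2⁻¹ : ℝ) ≠ 0)] at h2
    have h3 : LinearMap.range As.mulVecLin ≤ LinearMap.range (matAtom ρ x).mulVecLin :=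
      hAs_le.trans h2
    refine (Submodule.eq_of_le_of_finrank_le h3 ?_).symm
    have h4 := hmaxrk ρ hρ
    rw [← hμsrk] at h4
    exact h4
  have hWle : ∀ μ : MatMeasure X q, Represents E Λ μ →
      LinearMap.range (matAtom μ x).mulVecLin ≤ LinearMap.range As.mulVecLin := by
    intro μ h
    obtain ⟨ρ, hρ, hatom⟩ := hcomb μ h
    have heqρ := hrhoeq μ h ρ hρ hatom
    have h1 : LinearMap.range ((2⁻¹ : ℝ) • matAtom μ x).mulVecLin
        ≤ LinearMap.range (matAtom ρ x).mulVecLin := by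
      rw [hatom]
      exact psd_range_le
        (psd_smul (by norm_num) (psd_smul ENNReal.toReal_nonneg (μ.posSemidef x)))
        (psd_smul (by norm_num) hAfinPSD)
    rw [ran_smul_ne (by norm_num : (2⁻¹ : ℝ) ≠ 0)] at h1
    exact h1.trans heqρ.le
  have hAfin_eq : LinearMap.range Afin.mulVecLin = LinearMap.range As.mulVecLin := by
    obtain ⟨ρ, hρ, hatom⟩ := hcomb μs hμs
    have heqρ := hrhoeq μs hμs ρ hρ hatom
    refine le_antisymm ?_ hAs_le
    have h2 : LinearMap.range ((2⁻¹ : ℝ) • Afin).mulVecLin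
        ≤ LinearMap.range (matAtom ρ x).mulVecLin := by
      rw [hatom, add_comm]
      exact psd_range_le (psd_smul (by norm_num) hAfinPSD)
        (psd_smul (by norm_num) (psd_smul ENNReal.toReal_nonneg (μs.posSemidef x)))
    rw [ran_smul_ne (by norm_num : (2⁻¹ : ℝ) ≠ 0)] at h2
    exact h2.trans heqρ.le
  have hsetEq : {v | ∃ μ : MatMeasure X q, Represents E Λ μ ∧ ∃ u, (matAtom μ x).mulVec u = v}
      = {v | ∃ u, Afin.mulVec u = v} := by
    ext v
    constructor
    · rintro ⟨μ, hμ, u, rfl⟩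
      have h1 : matAtom μ x *ᵥ u ∈ LinearMap.range (matAtom μ x).mulVecLin := ⟨u, rfl⟩
      have h2 := hWle μ hμ h1
      rw [← hAfin_eq] at h2
      obtain ⟨u', hu'⟩ := h2
      exact ⟨u', hu'⟩
    · rintro ⟨u, rfl⟩
      have h1 : Afin *ᵥ u ∈ LinearMap.range Afin.mulVecLin := ⟨u, rfl⟩
      rw [hAfin_eq] at h1
      obtain ⟨u', hu'⟩ := h1
      exact ⟨μs, hμs, u', hu'⟩
  refine ⟨⟨LinearMap.range Afin.mulVecLin, ?_⟩, k, pts, Mats, hMatsPSD, hrepfin, hsetEq⟩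
  rw [hsetEq]
  ext v
  simp only [SetLike.mem_coe, LinearMap.mem_range, Set.mem_setOf_eq, Matrix.mulVecLin_apply]
end
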